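/- arXiv:math/0102117 — 5 statements merged into one kernel-verified Lean document; each statement's English description precedes it below -/
import Mathlib

section
/- For all unit vectors v, w ∈ S¹M: −2D(F) ≤ d_M(b(v), b(w)) − d_{M'}(b(F̃(v)), b(F̃(w))) ≤ 2D(F). -/
open Metric Set Filter

/-- A unit-speed (local) geodesic line in a metric space: locally, distances along the
curve are realized. -/
def IsUnitGeodesic {M : Type*} [MetricSpace M] (c : ℝ → M) : Prop :=
  ∃ ε > 0, ∀ s t : ℝ, |s - t| ≤ ε → dist (c s) (c t) = |s - t|

/-- The unit sphere bundle `S¹M`, modeled as the space of unit-speed geodesics of `M`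
(a geodesic records the basepoint `c 0` together with its direction). -/
def SphereBundle (M : Type*) [MetricSpace M] : Type _ :=
  {c : ℝ → M // IsUnitGeodesic c}

instance {M : Type*} [MetricSpace M] : TopologicalSpace (SphereBundle M) :=
  inferInstanceAs (TopologicalSpace {c : ℝ → M // IsUnitGeodesic c})

/-- The geodesic flow `g_t` on the unit sphere bundle. -/
def geodFlow {M : Type*} [MetricSpace M] (t : ℝ) (c : SphereBundle M) : SphereBundle M :=
  ⟨fun s => c.1 (s + t), by
    obtain ⟨ε, hε, h⟩ := c.2
    refine ⟨ε, hε, fun s s' hss => ?_⟩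
    have : |s + t - (s' + t)| ≤ ε := by simpa [add_sub_add_right_eq_sub] using hss
    simpa [add_sub_add_right_eq_sub] using h (s + t) (s' + t) this⟩

/-- A `C⁰` conjugacy between the geodesic flows of `N` and `N'`. -/
structure FlowConjugacy (N N' : Type*) [MetricSpace N] [MetricSpace N'] where
  F : SphereBundle N → SphereBundle N'
  continuous : Continuous F
  conj : ∀ (t : ℝ) (c : SphereBundle N), F (geodFlow t c) = geodFlow t (F c)

/-- `m` is a midpoint of `y` and `z`. -/
def IsMidpointPt {M : Type*} [MetricSpace M] (y z m : M) : Prop :=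
  dist y m = dist y z / 2 ∧ dist m z = dist y z / 2

/-- The CAT(0) (nonpositive curvature) comparison inequality for a midpoint `m` of `y,z`,
viewed from `x`. -/
def CAT0Comparison {M : Type*} [MetricSpace M] (x y z m : M) : Prop :=
  dist x m ^ 2 ≤ (dist x y ^ 2 + dist x z ^ 2) / 2 - dist y z ^ 2 / 4

/-- `M` is (like) a Hadamard space: it is a geodesic space in which every unit-speed local
geodesic is globally minimizing, and the CAT(0) comparison inequality holds; this encodes
that `M` is a simply connected space of nonpositive curvature. -/
def IsHadamardLike (M : Type*) [MetricSpace M] : Prop :=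
  (∀ x y : M, ∃ c : SphereBundle M, c.1 0 = x ∧ c.1 (dist x y) = y) ∧
  (∀ c : SphereBundle M, ∀ s t : ℝ, dist (c.1 s) (c.1 t) = |s - t|) ∧
  (∀ x y z m : M, IsMidpointPt y z m → CAT0Comparison x y z m)

/-- The action of a group element on the unit sphere bundle (by isometries). -/
def gAct {Γ M : Type*} [Group Γ] [MetricSpace M] [MulAction Γ M] [IsIsometricSMul Γ M]
    (g : Γ) (c : SphereBundle M) : SphereBundle M :=
  ⟨fun t => g • c.1 t, by
    obtain ⟨ε, hε, h⟩ := c.2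
    exact ⟨ε, hε, fun s t hst => by rw [dist_smul]; exact h s t hst⟩⟩

/-- The action of `Γ` on `M` is cocompact (i.e. the quotient `N = M/Γ` is compact). -/
def CocompactAction (Γ M : Type*) [Group Γ] [MetricSpace M] [MulAction Γ M] : Prop :=
  ∃ K : Set M, IsCompact K ∧ (⋃ g : Γ, (fun m => g • m) '' K) = Set.univ

/-- Uniform continuity of a map between unit sphere bundles (distances between unit
vectors are measured by comparing the corresponding geodesics on the time interval
`[-1, 1]`). -/
def UnifContOnSphere {N N' : Type*} [MetricSpace N] [MetricSpace N']
    (F : SphereBundle N → SphereBundle N') : Prop :=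
  ∀ ε > (0:ℝ), ∃ δ > (0:ℝ), ∀ c c' : SphereBundle N,
    (∀ t ∈ Set.Icc (-1:ℝ) 1, dist (c.1 t) (c'.1 t) ≤ δ) →
    ∀ t ∈ Set.Icc (-1:ℝ) 1, dist ((F c).1 t) ((F c').1 t) ≤ ε

/-- The geodesic `c` stays within bounded distance of the geodesic `ν` with the same
parametrization; such `c` are exactly the "vertical" geodesics of `M_ν ≅ X_ν × ℝ`. -/
def ParallelTo {M : Type*} [MetricSpace M] (ν c : SphereBundle M) : Prop :=
  ∃ C : ℝ, ∀ t : ℝ, dist (c.1 t) (ν.1 t) ≤ C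

/-- `M_ν`: the union of all geodesics staying a bounded distance from `ν`. -/
def MSet {M : Type*} [MetricSpace M] (ν : SphereBundle M) : Set M :=
  {x | ∃ c : SphereBundle M, ParallelTo ν c ∧ x ∈ Set.range c.1}

/-- The minimal displacement set `M_γ` of an isometry `γ`. -/
def MinDispSet {Γ : Type*} [Group Γ] (M : Type*) [MetricSpace M] [MulAction Γ M]
    (γ : Γ) : Set M :=
  {m | ∀ x : M, dist m (γ • m) ≤ dist x (γ • x)}

/-- The point of the `ℓ²`-product `X × ℝ` with coordinates `(x, s)`. -/
noncomputable def pmk {X : Type*} [MetricSpace X] (x : X) (s : ℝ) : WithLp 2 (X × ℝ) :=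
  (WithLp.equiv 2 (X × ℝ)).symm (x, s)


/-- Lemma 1 of the paper.  `N` and `N'` are compact nonpositively curved
manifolds of dimension `n ≥ 3` with `C⁰` conjugate geodesic flows; `M`, `M'` are their
universal covers (simply connected, nonpositively curved = Hadamard-like, with cocompact
isometric actions of the common fundamental group `Γ`), and `F` is the lifted uniformly
continuous `Γ`-equivariant conjugacy of geodesic flows.  If `D` bounds the diameters of the
`F`-images of the unit sphere fibers `S¹ₘM` (measured at the basepoints), then for all
`v w ∈ S¹M`:
`-2D ≤ d_M(b v, b w) - d_{M'}(b (F v), b (F w)) ≤ 2D`. -/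
theorem distance_comparison_under_conjugacy
    {Γ M M' : Type*} [Group Γ] [MetricSpace M] [MetricSpace M']
    [MulAction Γ M] [MulAction Γ M'] [IsIsometricSMul Γ M] [IsIsometricSMul Γ M']
    [SimplyConnectedSpace M] [SimplyConnectedSpace M']
    (n : ℕ) (hn : 3 ≤ n)
    (hdim : Nonempty (ChartedSpace (EuclideanSpace ℝ (Fin n)) M) ∧
      Nonempty (ChartedSpace (EuclideanSpace ℝ (Fin n)) M'))
    (hM : IsHadamardLike M) (hM' : IsHadamardLike M')
    (hco : CocompactAction Γ M) (hco' : CocompactAction Γ M')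
    (F : FlowConjugacy M M')
    (hUC : UnifContOnSphere F.F)
    (hequiv : ∀ (g : Γ) (c : SphereBundle M), F.F (gAct g c) = gAct g (F.F c))
    (D : ℝ)
    (hD : ∀ v w : SphereBundle M, v.1 0 = w.1 0 →
      dist ((F.F v).1 0) ((F.F w).1 0) ≤ D)
    (v w : SphereBundle M) :
    -(2 * D) ≤ dist (v.1 0) (w.1 0) - dist ((F.F v).1 0) ((F.F w).1 0) ∧
      dist (v.1 0) (w.1 0) - dist ((F.F v).1 0) ((F.F w).1 0) ≤ 2 * D := by
  set d : ℝ := dist (v.1 0) (w.1 0) with hd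
  obtain ⟨c, hc0, hcd⟩ := hM.1 (v.1 0) (w.1 0)
  -- F v and F c are within D at time 0
  have h1 : dist ((F.F v).1 0) ((F.F c).1 0) ≤ D := hD v c hc0.symm
  -- w and geodFlow d c share basepoint
  have hflow0 : (geodFlow d c).1 0 = w.1 0 := by
    show c.1 (0 + d) = w.1 0
    rw [zero_add]; exact hcd
  have h2 : dist ((F.F w).1 0) ((F.F (geodFlow d c)).1 0) ≤ D :=
    hD w (geodFlow d c) hflow0.symm
  have hFflow : (F.F (geodFlow d c)).1 0 = (F.F c).1 d := by
    rw [F.conj d c]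
    show (F.F c).1 (0 + d) = (F.F c).1 d
    rw [zero_add]
  have h2' : dist ((F.F w).1 0) ((F.F c).1 d) ≤ D := by rwa [hFflow] at h2
  have hlen : dist ((F.F c).1 0) ((F.F c).1 d) = d := by
    rw [hM'.2.1 (F.F c) 0 d, abs_sub_comm, sub_zero, abs_of_nonneg dist_nonneg]
  constructor
  · -- d - dist(Fv,Fw) ≥ -2D, i.e. dist(Fv,Fw) ≤ d + 2D
    have := dist_triangle ((F.F v).1 0) ((F.F c).1 0) ((F.F w).1 0)
    have h3 := dist_triangle ((F.F c).1 0) ((F.F c).1 d) ((F.F w).1 0)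
    rw [hlen] at h3
    rw [dist_comm] at h2'
    linarith
  · -- d ≤ dist(Fv,Fw) + 2D
    have h4 := dist_triangle ((F.F c).1 0) ((F.F v).1 0) ((F.F c).1 d)
    have h5 := dist_triangle ((F.F v).1 0) ((F.F w).1 0) ((F.F c).1 d)
    rw [hlen] at h4
    rw [dist_comm] at h1
    linarith
end

section
/- For any geodesic ν in M, F̃ maps each vertical unit vector V(m) at m ∈ M_ν to a vertical unit vector of M'_{F̃(ν)}; this defines a map G_ν : M_ν → M'_{F̃(ν)} by F̃(V(m)) = V'(G_ν(m)), which satisfies G_ν(τ_t m) = τ'_t(G_ν(m)) for all t (where τ_t, τ'_t denote vertical translation by t in M_ν ≅ X_ν × ℝ and M'_{F̃(ν)} ≅ X'_{F̃(ν)} × ℝ), and hence induces a well-defined map GX_ν : X_ν → X'_{F̃(ν)}. -/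
open Metric Set Filter

section Geom
variable {M : Type*} [MetricSpace M]

lemma midpoint_symm {y z m : M} (h : IsMidpointPt y z m) : IsMidpointPt z y m := by
  obtain ⟨h1, h2⟩ := h
  constructor
  · rw [dist_comm z m, dist_comm z y]; exact h2
  · rw [dist_comm m y, dist_comm z y]; exact h1

lemma exists_midpointPt (hM : IsHadamardLike M) (y z : M) : ∃ m, IsMidpointPt y z m := by
  obtain ⟨c, h0, h1⟩ := hM.1 y z
  have d0 := hM.2.1 c
  set d := dist y z with hd
  have hdn : 0 ≤ d := dist_nonneg
  refine ⟨c.1 (d / 2), ?_, ?_⟩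
  · rw [← hd, ← h0, d0 0 (d/2), zero_sub, abs_neg, abs_of_nonneg (by linarith)]
  · rw [← hd, ← h1, d0 (d/2) d, show d/2 - d = -(d/2) by ring, abs_neg,
      abs_of_nonneg (by linarith)]

lemma midpoint_dist_le (hM : IsHadamardLike M) {y z z' m p : M}
    (hm : IsMidpointPt y z m) (hp : IsMidpointPt y z' p) : dist m p ≤ dist z z' / 2 := by
  have h1 := hM.2.2 m y z' p hp
  have h2 := hM.2.2 z' y z m hm
  unfold CAT0Comparison at h1 h2
  rw [dist_comm z' y, dist_comm z' z, dist_comm z' m] at h2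
  rw [dist_comm m y, hm.1] at h1
  have hA : (dist y z / 2) ^ 2 = dist y z ^ 2 / 4 := by ring
  have key : dist m p ^ 2 ≤ (dist z z' / 2) ^ 2 := by nlinarith [h1, h2]
  nlinarith [key, dist_nonneg (x := m) (y := p), dist_nonneg (x := z) (y := z'),
    sq_nonneg (dist m p + dist z z' / 2)]

lemma geodesic_midpoint (hM : IsHadamardLike M) (a : SphereBundle M) (s t : ℝ) :
    IsMidpointPt (a.1 s) (a.1 t) (a.1 ((s + t) / 2)) := by
  constructor
  · rw [hM.2.1 a s ((s+t)/2), hM.2.1 a s t]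
    rw [show s - (s+t)/2 = (s-t)/2 by ring, abs_div]
    simp
  · rw [hM.2.1 a ((s+t)/2) t, hM.2.1 a s t]
    rw [show (s+t)/2 - t = (s-t)/2 by ring, abs_div]
    simp

lemma dist_convex_mid (hM : IsHadamardLike M) (a b : SphereBundle M) (s t : ℝ) :
    dist (a.1 ((s + t) / 2)) (b.1 ((s + t) / 2)) ≤
      (dist (a.1 s) (b.1 s) + dist (a.1 t) (b.1 t)) / 2 := by
  obtain ⟨p, hp⟩ := exists_midpointPt hM (a.1 s) (b.1 t)
  have h1 : dist (a.1 ((s+t)/2)) p ≤ dist (a.1 t) (b.1 t) / 2 :=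
    midpoint_dist_le hM (geodesic_midpoint hM a s t) hp
  have hm' : IsMidpointPt (b.1 t) (b.1 s) (b.1 ((s+t)/2)) := by
    have := geodesic_midpoint hM b t s
    rwa [show (t+s)/2 = (s+t)/2 by ring] at this
  have h2 : dist p (b.1 ((s+t)/2)) ≤ dist (a.1 s) (b.1 s) / 2 :=
    midpoint_dist_le hM (midpoint_symm hp) hm'
  calc dist (a.1 ((s+t)/2)) (b.1 ((s+t)/2)) ≤ dist (a.1 ((s+t)/2)) p + dist p (b.1 ((s+t)/2)) :=
        dist_triangle _ _ _
    _ ≤ _ := by linarith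

end Geom

section Rigid
variable {M : Type*} [MetricSpace M]

lemma parallel_rigid (hM : IsHadamardLike M) (ν a b : SphereBundle M)
    (ha : ParallelTo ν a) (hb : ParallelTo ν b) {s₀ t₀ : ℝ} (h : a.1 s₀ = b.1 t₀) :
    ∀ u : ℝ, a.1 (u + (s₀ - t₀)) = b.1 u := by
  obtain ⟨Ca, hCa⟩ := ha
  obtain ⟨Cb, hCb⟩ := hb
  set α := s₀ - t₀ with hα
  set a' := geodFlow α a with ha'
  have ha'v : ∀ u, a'.1 u = a.1 (u + α) := fun u => rfl
  set g : ℝ → ℝ := fun u => dist (a'.1 u) (b.1 u) with hg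
  have hbd : ∀ u, g u ≤ Ca + |α| + Cb := by
    intro u
    have t4 := dist_triangle4 (a'.1 u) (ν.1 (u + α)) (ν.1 u) (b.1 u)
    have e1 : dist (a'.1 u) (ν.1 (u + α)) ≤ Ca := hCa (u + α)
    have e2 : dist (ν.1 (u + α)) (ν.1 u) = |α| := by
      rw [hM.2.1 ν (u + α) u, add_sub_cancel_left]
    have e3 : dist (ν.1 u) (b.1 u) ≤ Cb := by rw [dist_comm]; exact hCb u
    simp only [hg]; linarith
  have hmid : ∀ s t, g ((s + t) / 2) ≤ (g s + g t) / 2 := fun s t => dist_convex_mid hM a' b s t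
  have hzero : g t₀ = 0 := by
    simp only [hg, ha'v, show t₀ + α = s₀ by rw [hα]; ring, h, dist_self]
  intro u
  have key : g u = 0 := by
    by_contra hne
    have hpos : 0 < g u := lt_of_le_of_ne dist_nonneg (Ne.symm hne)
    have grow : ∀ k : ℕ, 2 ^ k * g u ≤ g (t₀ + 2 ^ k * (u - t₀)) := by
      intro k
      induction k with
      | zero => simp
      | succ k ih =>
        have hm := hmid t₀ (t₀ + 2 ^ (k + 1) * (u - t₀))
        rw [show (t₀ + (t₀ + 2 ^ (k + 1) * (u - t₀))) / 2 = t₀ + 2 ^ k * (u - t₀) by ring,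
          hzero] at hm
        have h2 : 2 ^ (k + 1) * g u = 2 * (2 ^ k * g u) := by ring
        rw [h2]
        linarith
    obtain ⟨k, hk⟩ := pow_unbounded_of_one_lt ((Ca + |α| + Cb) / g u) (one_lt_two (α := ℝ))
    have h1 := grow k
    have h2 := hbd (t₀ + 2 ^ k * (u - t₀))
    rw [div_lt_iff₀ hpos] at hk
    nlinarith
  have : a'.1 u = b.1 u := by
    have : dist (a'.1 u) (b.1 u) = 0 := key
    exact dist_eq_zero.mp this
  simpa [ha'v] using this

end Rigid

section TB
variable {Γ M : Type*} [Group Γ] [MetricSpace M] [MulAction Γ M] [IsIsometricSMul Γ M]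

lemma smul_closedBall_eq (g : Γ) (k : M) (r : ℝ) :
    (fun z => g • z) '' closedBall k r = closedBall (g • k) r := by
  ext w
  constructor
  · rintro ⟨z, hz, rfl⟩
    simpa [mem_closedBall, dist_smul] using hz
  · intro hw
    refine ⟨g⁻¹ • w, ?_, by simp⟩
    have : dist (g⁻¹ • w) k = dist w (g • k) := by
      rw [show (k : M) = g⁻¹ • (g • k) by simp, dist_smul]
      simp
    simpa [mem_closedBall, this] using hw

lemma ball_totallyBounded [LocallyCompactSpace M] (hM : IsHadamardLike M)
    (hco : CocompactAction Γ M) (x₀ : M) (s : ℝ) :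
    TotallyBounded (closedBall x₀ s) := by
  obtain ⟨K, hKc, hKu⟩ := hco
  have hKcov : ∀ y : M, ∃ (g : Γ) (k : M), k ∈ K ∧ y = g • k := by
    intro y
    have : y ∈ ⋃ g : Γ, (fun m => g • m) '' K := by rw [hKu]; trivial
    obtain ⟨S, ⟨g, rfl⟩, hy⟩ := this
    obtain ⟨k, hk, hky⟩ := hy
    exact ⟨g, k, hk, hky.symm⟩
  have hKne : K.Nonempty := by
    obtain ⟨g, k, hk, _⟩ := hKcov x₀
    exact ⟨k, hk⟩
  -- local compactness gives compact closed balls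
  have hloc : ∀ x : M, ∃ r, 0 < r ∧ IsCompact (closedBall x r) := fun x =>
    exists_isCompact_closedBall x
  choose r hrpos hrc using hloc
  -- finite subcover of K
  have hcov : K ⊆ ⋃ x ∈ K, ball x (r x / 2) := fun x hx =>
    mem_biUnion hx (by simp [hrpos x, half_pos])
  obtain ⟨t, htK, htfin, htcov⟩ :=
    hKc.elim_finite_subcover_image (fun x _ => isOpen_ball) hcov
  have htne : t.Nonempty := by
    obtain ⟨k, hk⟩ := hKne
    have := htcov hk
    obtain ⟨x, hx, -⟩ := mem_iUnion₂.mp this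
    exact ⟨x, hx⟩
  -- uniform radius r₀
  obtain ⟨r₀, hr₀pos, hr₀le⟩ : ∃ r₀ > 0, ∀ x ∈ t, r₀ ≤ r x / 2 := by
    classical
    set T := htfin.toFinset with hT
    have hTne : T.Nonempty := by
      obtain ⟨x, hx⟩ := htne
      exact ⟨x, htfin.mem_toFinset.mpr hx⟩
    refine ⟨T.inf' hTne (fun x => r x / 2), ?_, ?_⟩
    · obtain ⟨x, -, hxe⟩ := T.exists_mem_eq_inf' hTne (fun x => r x / 2)
      rw [hxe]
      exact half_pos (hrpos x)
    · intro x hx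
      exact Finset.inf'_le _ (htfin.mem_toFinset.mpr hx)
  -- every ball of radius r₀ is totally bounded
  have hloc₀ : ∀ y : M, TotallyBounded (closedBall y r₀) := by
    intro y
    obtain ⟨g, k, hk, rfl⟩ := hKcov y
    obtain ⟨x, hx, hkx⟩ := mem_iUnion₂.mp (htcov hk)
    have hsub : closedBall k r₀ ⊆ closedBall x (r x) := by
      intro z hz
      have h1 : dist z k ≤ r₀ := mem_closedBall.mp hz
      have h2 : dist k x < r x / 2 := mem_ball.mp hkx
      have := hr₀le x hx
      exact mem_closedBall.mpr (by
        calc dist z x ≤ dist z k + dist k x := dist_triangle _ _ _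
          _ ≤ r x := by linarith)
    have htbk : TotallyBounded (closedBall k r₀) :=
      ((hrc x).totallyBounded).subset hsub
    have := htbk.image (isometry_smul M g).uniformContinuous
    rwa [smul_closedBall_eq] at this
  -- propagate to all radii
  have hstep : ∀ ρ : ℝ, 0 ≤ ρ → TotallyBounded (closedBall x₀ ρ) →
      TotallyBounded (closedBall x₀ (ρ + r₀ / 2)) := by
    intro ρ hρ htb
    obtain ⟨P, hPfin, hPcov⟩ := (totallyBounded_iff.mp htb) (r₀ / 2) (half_pos hr₀pos)
    have hsub : closedBall x₀ (ρ + r₀ / 2) ⊆ ⋃ y ∈ P, closedBall y r₀ := by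
      intro z hz
      obtain ⟨σ, hσ0, hσD⟩ := hM.1 x₀ z
      set D := dist x₀ z with hD
      have hDz : dist z x₀ ≤ ρ + r₀ / 2 := mem_closedBall.mp hz
      have hDnn : 0 ≤ D := dist_nonneg
      set w := σ.1 (min D ρ) with hw
      have hwx : dist w x₀ ≤ ρ := by
        rw [hw, ← hσ0, hM.2.1 σ (min D ρ) 0, sub_zero,
          abs_of_nonneg (le_min hDnn hρ)]
        exact min_le_right _ _
      have hwz : dist w z ≤ r₀ / 2 := by
        rw [hw, ← hσD, hM.2.1 σ (min D ρ) D]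
        rw [abs_of_nonpos (by simp [min_le_left])]
        have : D ≤ ρ + r₀ / 2 := by rwa [hD, dist_comm]
        rcases le_total D ρ with hc | hc
        · rw [min_eq_left hc]; linarith
        · rw [min_eq_right hc]; linarith
      obtain ⟨y, hy, hwy⟩ := mem_iUnion₂.mp (hPcov (mem_closedBall.mpr hwx))
      refine mem_biUnion hy (mem_closedBall.mpr ?_)
      have := mem_ball.mp hwy
      calc dist z y ≤ dist z w + dist w y := dist_triangle _ _ _
        _ ≤ r₀ := by rw [dist_comm z w]; linarith
    exact TotallyBounded.subset hsub
      ((totallyBounded_biUnion hPfin).mpr fun y _ => hloc₀ y)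
  have hind : ∀ k : ℕ, TotallyBounded (closedBall x₀ (r₀ + k * (r₀ / 2))) := by
    intro k
    induction k with
    | zero => simpa using hloc₀ x₀
    | succ k ih =>
      have := hstep (r₀ + k * (r₀ / 2)) (by positivity) ih
      rwa [show r₀ + (k : ℝ) * (r₀ / 2) + r₀ / 2 = r₀ + ((k : ℕ) + 1 : ℕ) * (r₀ / 2) by
        push_cast; ring] at this
  obtain ⟨k, hk⟩ := exists_nat_ge ((s - r₀) / (r₀ / 2))
  refine (hind k).subset (closedBall_subset_closedBall ?_)
  rw [div_le_iff₀ (half_pos hr₀pos)] at hk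
  linarith

end TB

section Net
variable {M : Type*} [MetricSpace M]

lemma geodesic_net (hM : IsHadamardLike M) (x₀ : M) (R : ℝ)
    (hTB : TotallyBounded (closedBall x₀ (R + 1))) {δ : ℝ} (hδ : 0 < δ) :
    ∃ T : Set (SphereBundle M), T.Finite ∧ ∀ a : SphereBundle M, dist (a.1 0) x₀ ≤ R →
      ∃ b ∈ T, ∀ u ∈ Icc (-1 : ℝ) 1, dist (a.1 u) (b.1 u) ≤ δ := by
  classical
  set A : Set (SphereBundle M) := {a | dist (a.1 0) x₀ ≤ R} with hA
  rcases A.eq_empty_or_nonempty with hAe | hAne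
  · exact ⟨∅, finite_empty, fun a ha => absurd (show a ∈ A from ha) (by simp [hAe])⟩
  obtain ⟨m0, hm0⟩ := exists_nat_ge (8 / δ)
  set m : ℕ := m0 + 1 with hm
  have hmpos : (0 : ℝ) < m := by positivity
  have hmδ : 2 / (m : ℝ) ≤ δ / 4 := by
    rw [div_le_div_iff₀ hmpos (by norm_num)]
    have h8 : 8 / δ ≤ (m : ℝ) := by
      refine hm0.trans ?_
      simp [hm]
    rw [div_le_iff₀ hδ] at h8
    linarith
  set tj : ℕ → ℝ := fun j => -1 + j * (2 / m) with htj
  -- values of geodesics in A on [-1,1] lie in the big ball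
  have hval : ∀ a ∈ A, ∀ u ∈ Icc (-1 : ℝ) 1, a.1 u ∈ closedBall x₀ (R + 1) := by
    intro a ha u hu
    have h1 : dist (a.1 u) (a.1 0) = |u| := by rw [hM.2.1 a u 0, sub_zero]
    have h2 : |u| ≤ 1 := abs_le.mpr ⟨hu.1, hu.2⟩
    have : dist (a.1 u) x₀ ≤ dist (a.1 u) (a.1 0) + dist (a.1 0) x₀ := dist_triangle _ _ _
    exact mem_closedBall.mpr (by rw [h1] at this; linarith [show dist (a.1 0) x₀ ≤ R from ha])
  have htjmem : ∀ j : Fin (m + 1), tj j ∈ Icc (-1 : ℝ) 1 := by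
    intro j
    have hj : (j : ℝ) ≤ m := by exact_mod_cast Nat.le_of_lt_succ j.2
    constructor
    · have : 0 ≤ (j : ℝ) * (2 / m) := by positivity
      simp only [htj]; linarith
    · have : (j : ℝ) * (2 / m) ≤ m * (2 / m) := by
        apply mul_le_mul_of_nonneg_right hj; positivity
      have hm2 : (m : ℝ) * (2 / m) = 2 := by field_simp
      simp only [htj]; linarith [hm2 ▸ this]
  obtain ⟨P, hPfin, hPcov⟩ := (totallyBounded_iff.mp hTB) (δ / 8) (by positivity)
  have hsel : ∀ a ∈ A, ∀ j : Fin (m + 1), ∃ p ∈ P, dist (a.1 (tj j)) p < δ / 8 := by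
    intro a ha j
    have := hPcov (hval a ha (tj j) (htjmem j))
    obtain ⟨p, hp, hd⟩ := mem_iUnion₂.mp this
    exact ⟨p, hp, mem_ball.mp hd⟩
  have hsel' : ∀ (a : SphereBundle M) (j : Fin (m + 1)),
      ∃ p, a ∈ A → p ∈ P ∧ dist (a.1 (tj j)) p < δ / 8 := by
    intro a j
    by_cases ha : a ∈ A
    · obtain ⟨p, hp, hd⟩ := hsel a ha j
      exact ⟨p, fun _ => ⟨hp, hd⟩⟩
    · exact ⟨x₀, fun h => absurd h ha⟩
  choose φ hφ using hsel'
  have hφP : ∀ a ∈ A, ∀ j, φ a j ∈ P := fun a ha j => (hφ a j ha).1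
  have hφd : ∀ a ∈ A, ∀ j : Fin (m + 1), dist (a.1 (tj (j : ℕ))) (φ a j) < δ / 8 := fun a ha j => (hφ a j ha).2
  set V : Set (Fin (m + 1) → M) := {v | (∀ j, v j ∈ P) ∧ ∃ a ∈ A, φ a = v} with hV
  have hVfin : V.Finite := by
    have : V ⊆ Set.pi univ (fun _ : Fin (m + 1) => P) := by
      intro v hv
      exact fun j _ => hv.1 j
    exact (Set.Finite.pi (fun _ => hPfin)).subset this
  obtain ⟨a₀, ha₀⟩ := hAne
  have hVsel : ∀ v : Fin (m + 1) → M, ∃ a, v ∈ V → a ∈ A ∧ φ a = v := by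
    intro v
    by_cases hv : v ∈ V
    · obtain ⟨a, ha, hav⟩ := hv.2
      exact ⟨a, fun _ => ⟨ha, hav⟩⟩
    · exact ⟨a₀, fun h => absurd h hv⟩
  choose rep hrep using hVsel
  have hrepA : ∀ v ∈ V, rep v ∈ A := fun v hv => (hrep v hv).1
  have hrepφ : ∀ v ∈ V, φ (rep v) = v := fun v hv => (hrep v hv).2
  refine ⟨rep '' V, hVfin.image rep, ?_⟩
  intro a ha
  have haA : a ∈ A := ha
  have hφaV : φ a ∈ V := ⟨hφP a haA, a, haA, rfl⟩
  set b := rep (φ a) with hb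
  refine ⟨b, mem_image_of_mem rep hφaV, ?_⟩
  intro u hu
  -- choose nearby time index
  set x : ℝ := (u + 1) * m / 2 with hx
  have hx0 : 0 ≤ x := by
    have : (0:ℝ) ≤ u + 1 := by linarith [hu.1]
    positivity
  have hxm : x ≤ m := by
    have : u + 1 ≤ 2 := by linarith [hu.2]
    rw [hx, div_le_iff₀ (by norm_num : (0:ℝ) < 2)]
    nlinarith
  have hjle : ⌊x⌋₊ ≤ m := Nat.floor_le_of_le hxm
  set j : Fin (m + 1) := ⟨⌊x⌋₊, Nat.lt_succ_of_le hjle⟩ with hj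
  have hfl1 : (⌊x⌋₊ : ℝ) ≤ x := Nat.floor_le hx0
  have hfl2 : x < ⌊x⌋₊ + 1 := Nat.lt_floor_add_one x
  have hut : 0 ≤ u - tj j ∧ u - tj j ≤ 2 / m := by
    have he : u - tj j = (x - ⌊x⌋₊) * (2 / m) := by
      simp only [htj, hj, hx]
      field_simp
      ring
    constructor
    · rw [he]; have : (0:ℝ) ≤ x - ⌊x⌋₊ := by linarith
      positivity
    · rw [he]
      have h1 : x - ⌊x⌋₊ ≤ 1 := by linarith
      have h2 : (0:ℝ) ≤ 2 / m := by positivity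
      nlinarith
  have hdta : dist (a.1 u) (a.1 (tj j)) ≤ δ / 4 := by
    rw [hM.2.1 a u (tj j), abs_of_nonneg hut.1]
    linarith [hut.2, hmδ]
  have hdtb : dist (b.1 (tj j)) (b.1 u) ≤ δ / 4 := by
    rw [hM.2.1 b (tj j) u, abs_sub_comm, abs_of_nonneg hut.1]
    linarith [hut.2, hmδ]
  have hpa : dist (a.1 (tj (j : ℕ))) (φ a j) < δ / 8 := hφd a haA j
  have hbA : b ∈ A := hrepA (φ a) hφaV
  have hbφ : φ b = φ a := hrepφ (φ a) hφaV
  have hpb : dist (b.1 (tj (j : ℕ))) (φ a j) < δ / 8 := by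
    have := hφd b hbA j
    rwa [hbφ] at this
  have T1 := dist_triangle4 (a.1 u) (a.1 (tj (j : ℕ))) (φ a j) (b.1 u)
  have T2 := dist_triangle (φ a j) (b.1 (tj (j : ℕ))) (b.1 u)
  have hpb' : dist (φ a j) (b.1 (tj (j : ℕ))) < δ / 8 := by rwa [dist_comm] at hpb
  linarith

end Net

/-- In the lifted conjugacy setting, for any geodesic `ν` in `M`:
`F` takes each vertical geodesic of `M_ν` (i.e. each geodesic parallel to `ν`) to a vertical
geodesic of `M'_{F ν}`; consequently there is a map `G_ν : M_ν → M'_{F ν}` defined by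
`F(V(m)) = V'(G_ν m)`, it commutes with the vertical translations (`G_ν (τ_t m) = τ'_t (G_ν m)`,
expressed by `(F c)(t) = G (c t)` along verticals `c`), and it takes vertical lines to
vertical lines, hence induces a well-defined map `GX_ν : X_ν → X'_{F ν}` on the spaces of
verticals. -/
theorem conjugacy_induces_map_on_Mnu
    {Γ M M' : Type*} [Group Γ] [MetricSpace M] [MetricSpace M']
    [MulAction Γ M] [MulAction Γ M'] [IsIsometricSMul Γ M] [IsIsometricSMul Γ M']
    [SimplyConnectedSpace M] [SimplyConnectedSpace M']
    (n : ℕ) (hn : 3 ≤ n)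
    (hdim : Nonempty (ChartedSpace (EuclideanSpace ℝ (Fin n)) M) ∧
      Nonempty (ChartedSpace (EuclideanSpace ℝ (Fin n)) M'))
    (hM : IsHadamardLike M) (hM' : IsHadamardLike M')
    (hco : CocompactAction Γ M) (hco' : CocompactAction Γ M')
    (F : FlowConjugacy M M')
    (hUC : UnifContOnSphere F.F)
    (hequiv : ∀ (g : Γ) (c : SphereBundle M), F.F (gAct g c) = gAct g (F.F c))
    (ν : SphereBundle M) :
    (∀ c : SphereBundle M, ParallelTo ν c → ParallelTo (F.F ν) (F.F c)) ∧
    ∃ G : M → M',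
      Set.MapsTo G (MSet ν) (MSet (F.F ν)) ∧
      (∀ c : SphereBundle M, ParallelTo ν c →
        (F.F c).1 0 = G (c.1 0) ∧ ∀ t : ℝ, (F.F c).1 t = G (c.1 t)) ∧
      (∀ m ∈ MSet ν, ∀ m' ∈ MSet ν,
        (∃ c : SphereBundle M, ParallelTo ν c ∧ m ∈ Set.range c.1 ∧ m' ∈ Set.range c.1) →
        ∃ c' : SphereBundle M', ParallelTo (F.F ν) c' ∧
          G m ∈ Set.range c'.1 ∧ G m' ∈ Set.range c'.1) := by
  classical
  obtain ⟨⟨cs⟩, -⟩ := hdim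
  haveI : ChartedSpace (EuclideanSpace ℝ (Fin n)) M := cs
  haveI : LocallyCompactSpace M :=
    ChartedSpace.locallyCompactSpace (EuclideanSpace ℝ (Fin n)) M
  obtain ⟨K, hKc, hKu⟩ := hco
  have hKcov : ∀ y : M, ∃ (g : Γ) (k : M), k ∈ K ∧ y = g • k := by
    intro y
    have : y ∈ ⋃ g : Γ, (fun m => g • m) '' K := by rw [hKu]; trivial
    obtain ⟨S, ⟨g, rfl⟩, hy⟩ := this
    obtain ⟨k, hk, hky⟩ := hy
    exact ⟨g, k, hk, hky.symm⟩
  obtain ⟨g0, x₀, hx₀K, -⟩ := hKcov (ν.1 0)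
  obtain ⟨R₀, hR₀⟩ := hKc.isBounded.subset_closedBall x₀
  -- Part 1 : parallels map to parallels
  have part1 : ∀ c : SphereBundle M, ParallelTo ν c → ParallelTo (F.F ν) (F.F c) := by
    intro c hc
    obtain ⟨C, hC⟩ := hc
    have hC0 : 0 ≤ C := le_trans dist_nonneg (hC 0)
    set R : ℝ := R₀ + C with hR
    have hTB : TotallyBounded (closedBall x₀ (R + 1)) :=
      ball_totallyBounded (Γ := Γ) hM ⟨K, hKc, hKu⟩ x₀ (R + 1)
    obtain ⟨δ, hδ, hUCδ⟩ := hUC 1 one_pos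
    obtain ⟨T, hTfin, hTnet⟩ := geodesic_net hM x₀ R hTB hδ
    obtain ⟨D, hD⟩ : ∃ D, ∀ b ∈ T, ∀ b' ∈ T,
        dist ((F.F b).1 0) ((F.F b').1 0) ≤ D := by
      have hSfin : ((fun p : SphereBundle M × SphereBundle M =>
          dist ((F.F p.1).1 0) ((F.F p.2).1 0)) '' (T ×ˢ T)).Finite :=
        (hTfin.prod hTfin).image _
      obtain ⟨D, hDub⟩ := hSfin.bddAbove
      exact ⟨D, fun b hb b' hb' => hDub ⟨(b, b'), ⟨hb, hb'⟩, rfl⟩⟩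
    refine ⟨D + 2, fun t => ?_⟩
    obtain ⟨g, k, hk, hgk⟩ := hKcov (ν.1 t)
    set γ := g⁻¹ with hγ
    have hγν : γ • ν.1 t = k := by rw [hgk, hγ]; exact inv_smul_smul g k
    set νh := gAct γ (geodFlow t ν) with hνh
    set ch := gAct γ (geodFlow t c) with hch
    have hν0 : νh.1 0 = γ • ν.1 t := by
      show γ • ν.1 (0 + t) = γ • ν.1 t
      rw [zero_add]
    have hc0 : ch.1 0 = γ • c.1 t := by
      show γ • c.1 (0 + t) = γ • c.1 t
      rw [zero_add]
    have hbase_ν : dist (νh.1 0) x₀ ≤ R := by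
      rw [hν0, hγν]
      have := hR₀ hk
      rw [mem_closedBall] at this
      rw [hR]; linarith
    have hbase_c : dist (ch.1 0) x₀ ≤ R := by
      have h1 : dist (ch.1 0) (νh.1 0) = dist (c.1 t) (ν.1 t) := by
        rw [hc0, hν0, dist_smul]
      calc dist (ch.1 0) x₀ ≤ dist (ch.1 0) (νh.1 0) + dist (νh.1 0) x₀ := dist_triangle _ _ _
        _ ≤ C + R₀ := by
            rw [h1]
            have h2 : dist (νh.1 0) x₀ ≤ R₀ := by
              rw [hν0, hγν]
              exact mem_closedBall.mp (hR₀ hk)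
            linarith [hC t]
        _ = R := by rw [hR]; ring
    obtain ⟨b, hbT, hbnet⟩ := hTnet ch hbase_c
    obtain ⟨b', hb'T, hb'net⟩ := hTnet νh hbase_ν
    have h1 := hUCδ ch b hbnet 0 ⟨by norm_num, by norm_num⟩
    have h2 := hUCδ νh b' hb'net 0 ⟨by norm_num, by norm_num⟩
    have hDd := hD b hbT b' hb'T
    have tri : dist ((F.F ch).1 0) ((F.F νh).1 0) ≤ D + 2 := by
      have t4 := dist_triangle4 ((F.F ch).1 0) ((F.F b).1 0) ((F.F b').1 0) ((F.F νh).1 0)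
      have h2' : dist ((F.F b').1 0) ((F.F νh).1 0) ≤ 1 := by rw [dist_comm]; exact h2
      linarith
    have hFch : F.F ch = gAct γ (geodFlow t (F.F c)) := by
      rw [hch, hequiv γ (geodFlow t c), F.conj t c]
    have hFνh : F.F νh = gAct γ (geodFlow t (F.F ν)) := by
      rw [hνh, hequiv γ (geodFlow t ν), F.conj t ν]
    have e1 : (F.F ch).1 0 = γ • (F.F c).1 t := by
      rw [hFch]
      show γ • (F.F c).1 (0 + t) = γ • (F.F c).1 t
      rw [zero_add]
    have e2 : (F.F νh).1 0 = γ • (F.F ν).1 t := by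
      rw [hFνh]
      show γ • (F.F ν).1 (0 + t) = γ • (F.F ν).1 t
      rw [zero_add]
    rw [e1, e2, dist_smul] at tri
    exact tri
  -- definition of G
  set G : M → M' := fun x =>
    if h : ∃ p : SphereBundle M × ℝ, ParallelTo ν p.1 ∧ p.1.1 p.2 = x then
      (F.F h.choose.1).1 h.choose.2
    else (F.F ν).1 0 with hG
  have hGkey : ∀ c : SphereBundle M, ParallelTo ν c → ∀ t : ℝ, (F.F c).1 t = G (c.1 t) := by
    intro c hcpar t
    have hex : ∃ p : SphereBundle M × ℝ, ParallelTo ν p.1 ∧ p.1.1 p.2 = c.1 t :=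
      ⟨(c, t), hcpar, rfl⟩
    rw [hG]
    simp only [dif_pos hex]
    obtain ⟨q, hq⟩ : ∃ q : SphereBundle M × ℝ, hex.choose = q := ⟨hex.choose, rfl⟩
    rw [hq]
    have hpar₀ : ParallelTo ν q.1 := hq ▸ hex.choose_spec.1
    have heq₀ : q.1.1 q.2 = c.1 t := hq ▸ hex.choose_spec.2
    have hrig := parallel_rigid hM ν q.1 c hpar₀ hcpar heq₀
    have hceq : c = geodFlow (q.2 - t) q.1 :=
      Subtype.ext (funext fun u => (hrig u).symm)
    rw [hceq, F.conj]
    show (F.F q.1).1 (t + (q.2 - t)) = (F.F q.1).1 q.2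
    rw [add_sub_cancel]
  refine ⟨part1, G, ?_, ?_, ?_⟩
  · rintro x ⟨c, hcpar, s, hs⟩
    refine ⟨F.F c, part1 c hcpar, s, ?_⟩
    rw [hGkey c hcpar s, hs]
  · exact fun c hcpar => ⟨hGkey c hcpar 0, hGkey c hcpar⟩
  · rintro m _ m' _ ⟨c, hcpar, ⟨s, hs⟩, ⟨s', hs'⟩⟩
    refine ⟨F.F c, part1 c hcpar, ⟨s, ?_⟩, ⟨s', ?_⟩⟩
    · rw [hGkey c hcpar s, hs]
    · rw [hGkey c hcpar s', hs']
end

section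
/- For every γ ∈ Γ: F̃ takes M_γ to M'_γ (inducing maps G_γ : M_γ → M'_γ and GX_γ : X_γ → X'_γ); the translation amount of γ along the vertical ℝ-factor of M_γ equals its translation amount on M'_γ (equivalently, closed geodesics of N and of N' in the free homotopy class of γ have the same length); and G_γ commutes with the action of the centralizer Z(γ) of γ in Γ. -/
open Metric Set Filter

/-- `c` is a (positively oriented) axis of `γ`, on which `γ` translates by `L`. -/
def IsAxisOf {Γ M : Type*} [Group Γ] [MetricSpace M] [MulAction Γ M]
    (γ : Γ) (L : ℝ) (c : SphereBundle M) : Prop :=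
  ∀ t : ℝ, γ • c.1 t = c.1 (t + L)

section AuxLemmas

variable {Γ M : Type*} [Group Γ] [MetricSpace M] [MulAction Γ M]

lemma axis_pow_nat {γ : Γ} {L : ℝ} {c : SphereBundle M} (h : IsAxisOf γ L c) :
    ∀ (n : ℕ) (t : ℝ), γ ^ n • c.1 t = c.1 (t + n * L) := by
  intro n
  induction n with
  | zero => intro t; simp
  | succ n ih =>
    intro t
    have h1 : γ ^ (n + 1) • c.1 t = γ ^ n • (γ • c.1 t) := by
      rw [pow_succ, mul_smul]
    rw [h1, h t, ih (t + L)]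
    congr 1
    push_cast
    ring

lemma axis_zpow {γ : Γ} {L : ℝ} {c : SphereBundle M} (h : IsAxisOf γ L c) :
    ∀ (k : ℤ) (t : ℝ), γ ^ k • c.1 t = c.1 (t + k * L) := by
  intro k t
  obtain ⟨n, rfl | rfl⟩ := Int.eq_nat_or_neg k
  · rw [zpow_natCast, axis_pow_nat h n t]
    norm_num
  · rw [zpow_neg, zpow_natCast, inv_smul_eq_iff, axis_pow_nat h n]
    congr 1
    push_cast
    ring

lemma disp_lb [IsIsometricSMul Γ M]
    (hgeo : ∀ c : SphereBundle M, ∀ s t : ℝ, dist (c.1 s) (c.1 t) = |s - t|)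
    {γ : Γ} {L : ℝ} (hL : 0 < L) {c : SphereBundle M} (h : IsAxisOf γ L c) (x : M) :
    L ≤ dist x (γ • x) := by
  by_contra hlt
  push_neg at hlt
  set d := dist x (γ • x) with hd
  set e := dist (c.1 0) x with he
  have hpow : ∀ n : ℕ, dist x (γ ^ n • x) ≤ n * d := by
    intro n
    induction n with
    | zero => simp
    | succ n ih =>
      have h2 : γ ^ (n + 1) • x = γ • (γ ^ n • x) := by rw [pow_succ', mul_smul]
      calc dist x (γ ^ (n + 1) • x)
          ≤ dist x (γ • x) + dist (γ • x) (γ ^ (n + 1) • x) := dist_triangle _ _ _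
        _ = d + dist x (γ ^ n • x) := by rw [h2, dist_smul]
        _ ≤ d + n * d := by linarith
        _ = (n + 1 : ℕ) * d := by push_cast; ring
  have hmain : ∀ n : ℕ, (n : ℝ) * L ≤ 2 * e + n * d := by
    intro n
    have h1 : dist (c.1 0) (γ ^ n • c.1 0) = n * L := by
      rw [axis_pow_nat h n 0, hgeo c 0 (0 + n * L),
        show (0 : ℝ) - (0 + n * L) = -(n * L) by ring, abs_neg,
        abs_of_nonneg (by positivity)]
    have h3 : dist (γ ^ n • x) (γ ^ n • c.1 0) = e := by rw [dist_smul, dist_comm, he]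
    have h4 := hpow n
    have h5 := dist_triangle4 (c.1 0) x (γ ^ n • x) (γ ^ n • c.1 0)
    rw [h1, h3, ← he] at h5
    linarith
  obtain ⟨n, hn⟩ := exists_nat_gt (2 * e / (L - d))
  have hLd : 0 < L - d := by linarith
  have h2 : 2 * e < n * (L - d) := by
    rw [div_lt_iff₀ hLd] at hn; linarith
  have := hmain n
  nlinarith

lemma midpoint_pt_exists (hM : IsHadamardLike M) (p q : M) :
    ∃ mid : M, IsMidpointPt p q mid := by
  obtain ⟨cm, h0, hd⟩ := hM.1 p q
  have key := hM.2.1 cm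
  refine ⟨cm.1 (dist p q / 2), ?_, ?_⟩
  · calc dist p (cm.1 (dist p q / 2)) = dist (cm.1 0) (cm.1 (dist p q / 2)) := by rw [h0]
      _ = dist p q / 2 := by
        rw [key 0 (dist p q / 2), show (0 : ℝ) - dist p q / 2 = -(dist p q / 2) by ring,
          abs_neg, abs_of_nonneg (by positivity)]
  · calc dist (cm.1 (dist p q / 2)) q
        = dist (cm.1 (dist p q / 2)) (cm.1 (dist p q)) := by rw [hd]
      _ = dist p q / 2 := by
        rw [key (dist p q / 2) (dist p q),
          show dist p q / 2 - dist p q = -(dist p q / 2) by ring, abs_neg,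
          abs_of_nonneg (by positivity)]

lemma axis_unique (hM : IsHadamardLike M)
    {γ : Γ} {L : ℝ} (hL : 0 < L) {c c' : SphereBundle M}
    (h : IsAxisOf γ L c) (h' : IsAxisOf γ L c') {t s : ℝ}
    (heq : c.1 t = c'.1 s) (v : ℝ) : c'.1 v = c.1 (v + (t - s)) := by
  have hgeo := hM.2.1
  have step : ∀ u : ℝ, 0 ≤ u → u ≤ L → c.1 (t + u) = c'.1 (s + u) := by
    intro u hu huL
    have hy : c.1 (t + L) = c'.1 (s + L) := by rw [← h t, ← h' s, heq]
    have dxy : dist (c.1 t) (c.1 (t + L)) = L := by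
      rw [hgeo c t (t + L), show t - (t + L) = -L by ring, abs_neg, abs_of_nonneg hL.le]
    have dxp : dist (c.1 t) (c.1 (t + u)) = u := by
      rw [hgeo c t (t + u), show t - (t + u) = -u by ring, abs_neg, abs_of_nonneg hu]
    have dxq : dist (c.1 t) (c'.1 (s + u)) = u := by
      rw [heq, hgeo c' s (s + u), show s - (s + u) = -u by ring, abs_neg,
        abs_of_nonneg hu]
    have dpy : dist (c.1 (t + u)) (c.1 (t + L)) = L - u := by
      rw [hgeo c (t + u) (t + L), show t + u - (t + L) = -(L - u) by ring, abs_neg,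
        abs_of_nonneg (by linarith)]
    have dqy : dist (c'.1 (s + u)) (c.1 (t + L)) = L - u := by
      rw [hy, hgeo c' (s + u) (s + L), show s + u - (s + L) = -(L - u) by ring, abs_neg,
        abs_of_nonneg (by linarith)]
    obtain ⟨mid, hmid⟩ := midpoint_pt_exists hM (c.1 (t + u)) (c'.1 (s + u))
    have comp1 := hM.2.2 (c.1 t) (c.1 (t + u)) (c'.1 (s + u)) mid hmid
    have comp2 := hM.2.2 (c.1 (t + L)) (c.1 (t + u)) (c'.1 (s + u)) mid hmid
    unfold CAT0Comparison at comp1 comp2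
    rw [dxp, dxq] at comp1
    rw [dist_comm (c.1 (t + L)) (c.1 (t + u)), dpy,
      dist_comm (c.1 (t + L)) (c'.1 (s + u)), dqy] at comp2
    have tri : L ≤ dist (c.1 t) mid + dist (c.1 (t + L)) mid := by
      have htri := dist_triangle (c.1 t) mid (c.1 (t + L))
      rw [dxy, dist_comm mid (c.1 (t + L))] at htri
      exact htri
    have hA : (0 : ℝ) ≤ dist (c.1 t) mid := dist_nonneg
    have hB : (0 : ℝ) ≤ dist (c.1 (t + L)) mid := dist_nonneg
    have hdn : (0 : ℝ) ≤ dist (c.1 (t + u)) (c'.1 (s + u)) := dist_nonneg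
    have hAu : dist (c.1 t) mid ≤ u := by
      by_contra hcon
      push_neg at hcon
      nlinarith [sq_nonneg (dist (c.1 (t + u)) (c'.1 (s + u)))]
    have hBu : dist (c.1 (t + L)) mid ≤ L - u := by
      by_contra hcon
      push_neg at hcon
      nlinarith [sq_nonneg (dist (c.1 (t + u)) (c'.1 (s + u)))]
    have hAeq : dist (c.1 t) mid = u := by linarith
    have hd2 : dist (c.1 (t + u)) (c'.1 (s + u)) ^ 2 ≤ 0 := by nlinarith
    have hdz : dist (c.1 (t + u)) (c'.1 (s + u)) = 0 := by nlinarith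
    exact dist_eq_zero.mp hdz
  have h1 := Int.floor_le ((v - s) / L)
  have h2 := Int.lt_floor_add_one ((v - s) / L)
  have h0u : 0 ≤ v - s - ⌊(v - s) / L⌋ * L := by
    have h3 : (⌊(v - s) / L⌋ : ℝ) * L ≤ v - s := by
      calc (⌊(v - s) / L⌋ : ℝ) * L ≤ (v - s) / L * L := by nlinarith
        _ = v - s := by field_simp
    linarith
  have huL : v - s - ⌊(v - s) / L⌋ * L ≤ L := by
    have h3 : v - s < ((⌊(v - s) / L⌋ : ℝ) + 1) * L := by
      calc v - s = (v - s) / L * L := by field_simp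
        _ < ((⌊(v - s) / L⌋ : ℝ) + 1) * L := by nlinarith
    nlinarith
  have e1 : c'.1 v = γ ^ ⌊(v - s) / L⌋ • c'.1 (s + (v - s - ⌊(v - s) / L⌋ * L)) := by
    rw [axis_zpow h' ⌊(v - s) / L⌋ (s + (v - s - ⌊(v - s) / L⌋ * L))]
    congr 1
    ring
  rw [e1, ← step _ h0u huL, axis_zpow h ⌊(v - s) / L⌋ (t + (v - s - ⌊(v - s) / L⌋ * L))]
  congr 1
  ring

lemma axis_through [IsIsometricSMul Γ M] (hM : IsHadamardLike M)
    {γ : Γ} {L : ℝ} (hL : 0 < L) {c₀ : SphereBundle M} (h₀ : IsAxisOf γ L c₀)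
    (m : M) (hm : dist m (γ • m) = L) :
    ∃ c : SphereBundle M, IsAxisOf γ L c ∧ c.1 0 = m := by
  obtain ⟨hgeod, hgeo, _⟩ := hM
  obtain ⟨c, hc0, hcL⟩ := hgeod m (γ • m)
  rw [hm] at hcL
  have key : ∀ a b : ℝ, 0 ≤ a → 0 ≤ b → a + b ≤ L →
      dist (c.1 (L - a)) (γ • c.1 b) = a + b := by
    intro a b ha hb hab
    have e1 : dist (c.1 (L - a)) (c.1 L) = a := by
      rw [hgeo c (L - a) L, show L - a - L = -a by ring, abs_neg, abs_of_nonneg ha]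
    have e2 : dist (c.1 L) (γ • c.1 b) = b := by
      rw [hcL, ← hc0, dist_smul, hgeo c 0 b, show (0 : ℝ) - b = -b by ring, abs_neg,
        abs_of_nonneg hb]
    have hub : dist (c.1 (L - a)) (γ • c.1 b) ≤ a + b := by
      calc dist (c.1 (L - a)) (γ • c.1 b)
          ≤ dist (c.1 (L - a)) (c.1 L) + dist (c.1 L) (γ • c.1 b) := dist_triangle _ _ _
        _ = a + b := by rw [e1, e2]
    have h1 : L ≤ dist (c.1 b) (γ • c.1 b) := disp_lb hgeo hL h₀ (c.1 b)
    have h2 := dist_triangle (c.1 b) (c.1 (L - a)) (γ • c.1 b)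
    have h3 : dist (c.1 b) (c.1 (L - a)) = L - a - b := by
      rw [hgeo c b (L - a), show b - (L - a) = -(L - a - b) by ring, abs_neg,
        abs_of_nonneg (by linarith)]
    linarith
  have hk1 : ∀ u : ℝ, (⌊u / L⌋ : ℝ) * L ≤ u := by
    intro u
    have h1 := Int.floor_le (u / L)
    calc (⌊u / L⌋ : ℝ) * L ≤ u / L * L := by nlinarith
      _ = u := by field_simp
  have hk2 : ∀ u : ℝ, u < ((⌊u / L⌋ : ℝ) + 1) * L := by
    intro u
    have h1 := Int.lt_floor_add_one (u / L)
    calc u = u / L * L := by field_simp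
      _ < ((⌊u / L⌋ : ℝ) + 1) * L := by nlinarith
  set f : ℝ → M := fun u => γ ^ (⌊u / L⌋) • c.1 (u - ⌊u / L⌋ * L) with hf
  have hstep : ∀ s t : ℝ, s ≤ t → t - s ≤ L / 2 → dist (f s) (f t) = t - s := by
    intro s t hst hts
    have hks : ⌊s / L⌋ ≤ ⌊t / L⌋ := by
      apply Int.floor_le_floor
      exact (div_le_div_iff_of_pos_right hL).mpr hst
    have hkt : ⌊t / L⌋ ≤ ⌊s / L⌋ + 1 := by
      have h1 : t / L ≤ s / L + 1 := by
        rw [show s / L + 1 = (s + L) / L by rw [add_div, div_self hL.ne']]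
        exact (div_le_div_iff_of_pos_right hL).mpr (by linarith)
      calc ⌊t / L⌋ ≤ ⌊s / L + 1⌋ := Int.floor_le_floor h1
        _ = ⌊s / L⌋ + 1 := by rw [Int.floor_add_one]
    rcases (by omega : ⌊t / L⌋ = ⌊s / L⌋ ∨ ⌊t / L⌋ = ⌊s / L⌋ + 1) with hcase | hcase
    · simp only [hf, hcase]
      rw [dist_smul, hgeo,
        show s - ⌊s / L⌋ * L - (t - ⌊s / L⌋ * L) = -(t - s) by ring, abs_neg,
        abs_of_nonneg (by linarith)]
    · set a := ((⌊s / L⌋ : ℝ) + 1) * L - s with hadef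
      set b := t - ((⌊s / L⌋ : ℝ) + 1) * L with hbdef
      have ha : 0 ≤ a := by
        have := hk2 s
        simp only [hadef]; linarith
      have hb : 0 ≤ b := by
        have h4 := hk1 t
        rw [hcase] at h4
        push_cast at h4
        simp only [hbdef]; linarith
      have hab : a + b ≤ L := by simp only [hadef, hbdef]; linarith
      have e1 : f s = γ ^ ⌊s / L⌋ • c.1 (L - a) := by
        have harg : s - (⌊s / L⌋ : ℝ) * L = L - a := by simp only [hadef]; ring
        simp only [hf, harg]
      have e2 : f t = γ ^ ⌊s / L⌋ • (γ • c.1 b) := by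
        simp only [hf, hcase]
        rw [← mul_smul, ← zpow_add_one]
        congr 1
        all_goals simp only [hbdef]; push_cast; try ring
      rw [e1, e2, dist_smul, key a b ha hb hab]
      simp only [hadef, hbdef]; ring
  have hunit : IsUnitGeodesic f := by
    refine ⟨L / 2, by positivity, fun s t hst => ?_⟩
    rcases le_total s t with hle | hle
    · have h1 : t - s ≤ L / 2 := by
        rw [abs_sub_comm, abs_of_nonneg (by linarith)] at hst; exact hst
      rw [hstep s t hle h1, abs_sub_comm, abs_of_nonneg (by linarith)]
    · have h1 : s - t ≤ L / 2 := by
        rw [abs_of_nonneg (by linarith)] at hst; exact hst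
      rw [dist_comm, hstep t s hle h1, abs_of_nonneg (by linarith)]
  refine ⟨⟨f, hunit⟩, ?_, ?_⟩
  · intro u
    show γ • f u = f (u + L)
    have hku : ⌊(u + L) / L⌋ = ⌊u / L⌋ + 1 := by
      rw [show (u + L) / L = u / L + 1 by rw [add_div, div_self hL.ne'],
        Int.floor_add_one]
    simp only [hf, hku]
    rw [← mul_smul, ← zpow_one_add, show (1 : ℤ) + ⌊u / L⌋ = ⌊u / L⌋ + 1 from add_comm 1 _]
    congr 1
    push_cast
    ring
  · show f 0 = m
    simp only [hf]
    norm_num [hc0]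

lemma FF_welldef {Γ M M' : Type*} [Group Γ] [MetricSpace M] [MetricSpace M']
    [MulAction Γ M] (hM : IsHadamardLike M) (F : FlowConjugacy M M')
    {γ : Γ} {L : ℝ} (hL : 0 < L) {c c' : SphereBundle M}
    (h : IsAxisOf γ L c) (h' : IsAxisOf γ L c') {t s : ℝ}
    (heq : c.1 t = c'.1 s) : (F.F c').1 s = (F.F c).1 t := by
  have hcc : c' = geodFlow (t - s) c := by
    apply Subtype.ext
    funext v
    exact axis_unique hM hL h h' heq v
  rw [hcc, F.conj]
  show (F.F c).1 (s + (t - s)) = (F.F c).1 t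
  congr 1
  ring

end AuxLemmas

/-- In the lifted conjugacy setting, for every `γ ∈ Γ` (with an axis of
translation length `L > 0` in `M`): `F` takes axes of `γ` in `M` to axes of `γ` in `M'`
with the *same* translation amount `L` (so `F` takes `M_γ` to `M'_γ` and closed geodesics
of `N` and `N'` in the free homotopy class of `γ` have the same length `L`); moreover the
induced map `G_γ : M_γ → M'_γ` (sending vertical vectors to vertical vectors) commutes with
the action of the centralizer `Z(γ)`. -/
theorem conjugacy_on_min_displacement_sets
    {Γ M M' : Type*} [Group Γ] [MetricSpace M] [MetricSpace M']
    [MulAction Γ M] [MulAction Γ M'] [IsIsometricSMul Γ M] [IsIsometricSMul Γ M']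
    [SimplyConnectedSpace M] [SimplyConnectedSpace M']
    (n : ℕ) (hn : 3 ≤ n)
    (hdim : Nonempty (ChartedSpace (EuclideanSpace ℝ (Fin n)) M) ∧
      Nonempty (ChartedSpace (EuclideanSpace ℝ (Fin n)) M'))
    (hM : IsHadamardLike M) (hM' : IsHadamardLike M')
    (hco : CocompactAction Γ M) (hco' : CocompactAction Γ M')
    (F : FlowConjugacy M M')
    (hUC : UnifContOnSphere F.F)
    (hequiv : ∀ (g : Γ) (c : SphereBundle M), F.F (gAct g c) = gAct g (F.F c))
    (γ : Γ) (L : ℝ) (hL : 0 < L)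
    (hax : ∃ c : SphereBundle M, IsAxisOf γ L c) :
    (∀ c : SphereBundle M, IsAxisOf γ L c → IsAxisOf (M := M') γ L (F.F c)) ∧
    (∀ m ∈ MinDispSet M γ, dist m (γ • m) = L) ∧
    (∀ m' ∈ MinDispSet M' γ, dist m' (γ • m') = L) ∧
    ∃ G : M → M',
      Set.MapsTo G (MinDispSet M γ) (MinDispSet M' γ) ∧
      (∀ c : SphereBundle M, IsAxisOf γ L c → ∀ t : ℝ, (F.F c).1 t = G (c.1 t)) ∧
      (∀ α : Γ, α * γ = γ * α → ∀ m ∈ MinDispSet M γ, G (α • m) = α • G m) := by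
    classical
  obtain ⟨c₀, hc₀⟩ := hax
  have hgeo := hM.2.1
  have hgeo' := hM'.2.1
  have part1 : ∀ c : SphereBundle M, IsAxisOf γ L c → IsAxisOf (M := M') γ L (F.F c) := by
    intro c hc
    have hgc : gAct γ c = geodFlow L c := Subtype.ext (funext fun t => hc t)
    have h1 : gAct γ (F.F c) = geodFlow L (F.F c) := by
      rw [← hequiv γ c, hgc, F.conj]
    intro t
    exact congrArg (fun z => z.1 t) h1
  have hax' : IsAxisOf (M := M') γ L (F.F c₀) := part1 c₀ hc₀
  have lb : ∀ x : M, L ≤ dist x (γ • x) := fun x => disp_lb hgeo hL hc₀ x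
  have lb' : ∀ x : M', L ≤ dist x (γ • x) := fun x => disp_lb hgeo' hL hax' x
  have axdisp : ∀ c : SphereBundle M, IsAxisOf γ L c →
      ∀ t : ℝ, dist (c.1 t) (γ • c.1 t) = L := by
    intro c hc t
    rw [dist_comm, hc t, hgeo c (t + L) t, show t + L - t = L by ring,
      abs_of_nonneg hL.le]
  have axdisp' : ∀ c : SphereBundle M', IsAxisOf γ L c →
      ∀ t : ℝ, dist (c.1 t) (γ • c.1 t) = L := by
    intro c hc t
    rw [dist_comm, hc t, hgeo' c (t + L) t, show t + L - t = L by ring,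
      abs_of_nonneg hL.le]
  have part2 : ∀ m ∈ MinDispSet M γ, dist m (γ • m) = L := by
    intro m hm
    refine le_antisymm ?_ (lb m)
    have h1 := hm (c₀.1 0)
    rw [axdisp c₀ hc₀ 0] at h1
    exact h1
  have part3 : ∀ m' ∈ MinDispSet M' γ, dist m' (γ • m') = L := by
    intro m' hm'
    refine le_antisymm ?_ (lb' m')
    have h1 := hm' ((F.F c₀).1 0)
    rw [axdisp' (F.F c₀) hax' 0] at h1
    exact h1
  refine ⟨part1, part2, part3, ?_⟩
  let G : M → M' := fun m =>
    if h : ∃ p : SphereBundle M × ℝ, IsAxisOf γ L p.1 ∧ p.1.1 p.2 = m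
    then (F.F h.choose.1).1 h.choose.2 else (F.F c₀).1 0
  have hGa : ∀ c : SphereBundle M, IsAxisOf γ L c → ∀ t : ℝ, (F.F c).1 t = G (c.1 t) := by
    intro c hc t
    have hex : ∃ p : SphereBundle M × ℝ, IsAxisOf γ L p.1 ∧ p.1.1 p.2 = c.1 t :=
      ⟨(c, t), hc, rfl⟩
    have hspec := hex.choose_spec
    have hval : G (c.1 t) = (F.F hex.choose.1).1 hex.choose.2 := dif_pos hex
    rw [hval]
    exact (FF_welldef hM F hL hc hspec.1 hspec.2.symm).symm
  refine ⟨G, ?_, hGa, ?_⟩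
  · intro m hm
    obtain ⟨d, hd, hd0⟩ := axis_through hM hL hc₀ m (part2 m hm)
    have hGm : G m = (F.F d).1 0 := by rw [← hd0, ← hGa d hd 0]
    intro x
    rw [hGm, axdisp' (F.F d) (part1 d hd) 0]
    exact lb' x
  · intro α hαγ m hm
    obtain ⟨d, hd, hd0⟩ := axis_through hM hL hc₀ m (part2 m hm)
    have hcomm : IsAxisOf γ L (gAct α d) := by
      intro u
      show γ • (α • d.1 u) = α • d.1 (u + L)
      rw [← mul_smul, ← hαγ, mul_smul, hd u]
    have e1 : (gAct α d).1 0 = α • m := by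
      show α • d.1 0 = α • m
      rw [hd0]
    calc G (α • m) = G ((gAct α d).1 0) := by rw [e1]
      _ = (F.F (gAct α d)).1 0 := (hGa _ hcomm 0).symm
      _ = (gAct α (F.F d)).1 0 := by rw [hequiv]
      _ = α • (F.F d).1 0 := rfl
      _ = α • G m := by rw [hGa d hd 0, hd0]
end

section
/- For every geodesic ν in M and every x ∈ M_ν, |B_ν(x) − B_{F̃(ν)}(G_ν(x))| ≤ 2D(F), where B_ν(x) := lim_{t→∞}(t − d(x, ν(t))) is the Busemann function of ν and B_{F̃(ν)} that of F̃(ν). -/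
open Metric Set Filter

/-- In the lifted conjugacy setting, with `D` bounding the (basepoint)
diameters of the `F`-images of unit sphere fibers: for every geodesic `ν` of `M` and every
point `x ∈ M_ν` (written as `x = c 0` for a vertical geodesic `c` parallel to `ν`, so that
`G_ν x = (F c) 0`), the Busemann functions `B_ν(x) = lim_{t→∞} (t - d(x, ν t))` and
`B_{F ν}(G_ν x)` differ by at most `2 D`. -/
theorem busemann_comparison
    {Γ M M' : Type*} [Group Γ] [MetricSpace M] [MetricSpace M']
    [MulAction Γ M] [MulAction Γ M'] [IsIsometricSMul Γ M] [IsIsometricSMul Γ M']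
    [SimplyConnectedSpace M] [SimplyConnectedSpace M']
    (n : ℕ) (hn : 3 ≤ n)
    (hdim : Nonempty (ChartedSpace (EuclideanSpace ℝ (Fin n)) M) ∧
      Nonempty (ChartedSpace (EuclideanSpace ℝ (Fin n)) M'))
    (hM : IsHadamardLike M) (hM' : IsHadamardLike M')
    (hco : CocompactAction Γ M) (hco' : CocompactAction Γ M')
    (F : FlowConjugacy M M')
    (hUC : UnifContOnSphere F.F)
    (hequiv : ∀ (g : Γ) (c : SphereBundle M), F.F (gAct g c) = gAct g (F.F c))
    (D : ℝ)
    (hD : ∀ v w : SphereBundle M, v.1 0 = w.1 0 →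
      dist ((F.F v).1 0) ((F.F w).1 0) ≤ D)
    (ν c : SphereBundle M) (hc : ParallelTo ν c)
    (b b' : ℝ)
    (hb : Tendsto (fun t : ℝ => t - dist (c.1 0) (ν.1 t)) atTop (nhds b))
    (hb' : Tendsto (fun t : ℝ => t - dist ((F.F c).1 0) ((F.F ν).1 t)) atTop (nhds b')) :
    |b - b'| ≤ 2 * D := by
  have key : ∀ t : ℝ,
      |(t - dist (c.1 0) (ν.1 t)) - (t - dist ((F.F c).1 0) ((F.F ν).1 t))| ≤ 2 * D := by
    intro t
    obtain ⟨σ, hσ0, hσd⟩ := hM.1 (c.1 0) (ν.1 t)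
    have h1 : dist ((F.F σ).1 0) ((F.F c).1 0) ≤ D := hD σ c hσ0
    have h2 : dist ((F.F σ).1 (dist (c.1 0) (ν.1 t))) ((F.F ν).1 t) ≤ D := by
      have e1 : (F.F (geodFlow (dist (c.1 0) (ν.1 t)) σ)).1 0
          = (F.F σ).1 (dist (c.1 0) (ν.1 t)) := by
        rw [F.conj]; simp [geodFlow]
      have e2 : (F.F (geodFlow t ν)).1 0 = (F.F ν).1 t := by
        rw [F.conj]; simp [geodFlow]
      have := hD (geodFlow (dist (c.1 0) (ν.1 t)) σ) (geodFlow t ν)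
        (by simp [geodFlow, hσd])
      rwa [e1, e2] at this
    have h3 : dist ((F.F σ).1 0) ((F.F σ).1 (dist (c.1 0) (ν.1 t)))
        = dist (c.1 0) (ν.1 t) := by
      rw [hM'.2.1 (F.F σ) 0 (dist (c.1 0) (ν.1 t))]
      simp [abs_of_nonneg dist_nonneg]
    have h4 : dist ((F.F c).1 0) ((F.F ν).1 t) ≤ dist (c.1 0) (ν.1 t) + 2 * D := by
      calc dist ((F.F c).1 0) ((F.F ν).1 t)
          ≤ dist ((F.F c).1 0) ((F.F σ).1 0) + dist ((F.F σ).1 0) ((F.F ν).1 t) :=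
            dist_triangle _ _ _
        _ ≤ dist ((F.F c).1 0) ((F.F σ).1 0)
            + (dist ((F.F σ).1 0) ((F.F σ).1 (dist (c.1 0) (ν.1 t)))
              + dist ((F.F σ).1 (dist (c.1 0) (ν.1 t))) ((F.F ν).1 t)) := by
            gcongr; exact dist_triangle _ _ _
        _ ≤ dist (c.1 0) (ν.1 t) + 2 * D := by
            rw [dist_comm ((F.F c).1 0)] at *
            linarith
    have h5 : dist (c.1 0) (ν.1 t) ≤ dist ((F.F c).1 0) ((F.F ν).1 t) + 2 * D := by
      have t1 : dist ((F.F σ).1 0) ((F.F σ).1 (dist (c.1 0) (ν.1 t)))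
          ≤ dist ((F.F σ).1 0) ((F.F c).1 0)
            + dist ((F.F c).1 0) ((F.F ν).1 t)
            + dist ((F.F ν).1 t) ((F.F σ).1 (dist (c.1 0) (ν.1 t))) :=
        dist_triangle4 _ _ _ _
      rw [dist_comm ((F.F ν).1 t)] at t1
      linarith
    rw [abs_sub_le_iff]
    constructor <;> linarith
  have htend : Tendsto
      (fun t : ℝ => |(t - dist (c.1 0) (ν.1 t)) - (t - dist ((F.F c).1 0) ((F.F ν).1 t))|)
      atTop (nhds |b - b'|) := (hb.sub hb').abs
  exact le_of_tendsto htend (Filter.Eventually.of_forall key)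
end

section
/- For any geodesic ν in M and any curve c in M_ν with ℝ-growth rate A (i.e. lim_{t→∞} ℝ_ν(c(t))/t = A), the curve G_ν ∘ c in M'_{F̃(ν)} also has ℝ-growth rate A. -/
open Metric Set Filter

/-- The product structure `M_ν ≅ X_ν × ℝ` (with the `ℓ²` = Riemannian product metric):
an isometric parametrization of `M_ν` by `X × ℝ` whose `ℝ`-lines are exactly the vertical
geodesics (the geodesics parallel to `ν`).  The `ℝ`-projection `ℝ_ν` of a point
`Φ (pmk x s)` is `s`. -/
structure VerticalSplitting {M : Type*} [MetricSpace M] (ν : SphereBundle M)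
    (X : Type*) [MetricSpace X] where
  Φ : WithLp 2 (X × ℝ) → M
  isom : Isometry Φ
  range_eq : Set.range Φ = MSet ν
  vertical : ∀ x : X, ∃ p : SphereBundle M,
    (∀ s : ℝ, p.1 s = Φ (pmk x s)) ∧ ParallelTo ν p


namespace GrowthAux


/-- Midpoint-convex + Lipschitz functions vanishing at `0` and `≤ 0` at `1` are `≤ 0` on `[0,1]`. -/
lemma midpoint_interp (φ : ℝ → ℝ) (K : ℝ)
    (hmid : ∀ u v : ℝ, φ ((u + v) / 2) ≤ (φ u + φ v) / 2)
    (hlip : ∀ u v : ℝ, |φ u - φ v| ≤ K * |u - v|)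
    (h0 : φ 0 = 0) (h1 : φ 1 ≤ 0) {s : ℝ} (hs0 : 0 ≤ s) (hs1 : s ≤ 1) :
    φ s ≤ 0 := by
  have hK : 0 ≤ K := by
    have := hlip 0 1
    have h := abs_nonneg (φ 0 - φ 1)
    simp only [zero_sub, abs_neg, abs_one, mul_one] at this
    linarith
  have hdy : ∀ n : ℕ, ∀ k : ℕ, k ≤ 2 ^ n → φ ((k : ℝ) / 2 ^ n) ≤ 0 := by
    intro n
    induction n with
    | zero =>
      intro k hk
      interval_cases k
      · simpa [h0] using le_refl (0:ℝ)
      · simpa using h1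
    | succ n ih =>
      intro k hk
      rcases Nat.even_or_odd k with ⟨j, hj⟩ | ⟨j, hj⟩
      · have hj2 : j ≤ 2 ^ n := by
          subst hj; rw [pow_succ] at hk; omega
        have hcast : ((k : ℝ)) / 2 ^ (n + 1) = (j : ℝ) / 2 ^ n := by
          subst hj
          have h2 : ((2:ℝ) ^ n) ≠ 0 := by positivity
          push_cast
          rw [pow_succ]
          field_simp
          ring
        rw [hcast]
        exact ih j hj2
      · have hk' : k < 2 ^ (n + 1) := by
          rcases lt_or_eq_of_le hk with h | h
          · exact h
          · exfalso
            have : Even (2 ^ (n+1)) := ⟨2 ^ n, by rw [pow_succ]; ring⟩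
            rw [← h] at this
            subst hj
            omega
        have hj1 : j + 1 ≤ 2 ^ n := by
          subst hj; rw [pow_succ] at hk'; omega
        have hj0 : j ≤ 2 ^ n := le_trans (Nat.le_succ j) hj1
        have key : ((k : ℝ)) / 2 ^ (n + 1)
            = (((j : ℝ) / 2 ^ n) + (((j : ℕ) + 1 : ℕ) : ℝ) / 2 ^ n) / 2 := by
          subst hj
          have h2 : ((2:ℝ) ^ n) ≠ 0 := by positivity
          push_cast
          rw [pow_succ]
          field_simp
          ring
        rw [key]
        calc φ _ ≤ (φ ((j : ℝ) / 2 ^ n) + φ ((((j : ℕ) + 1 : ℕ) : ℝ) / 2 ^ n)) / 2 := hmid _ _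
          _ ≤ 0 := by
              have h1' := ih j hj0
              have h2' := ih (j + 1) hj1
              linarith
  have happrox : ∀ n : ℕ, φ s ≤ K / 2 ^ n := by
    intro n
    have h2n : (0:ℝ) < 2 ^ n := by positivity
    set k : ℕ := ⌊s * 2 ^ n⌋₊ with hkdef
    have hk2 : k ≤ 2 ^ n := by
      apply Nat.floor_le_of_le
      push_cast
      nlinarith
    have hfl : (k : ℝ) ≤ s * 2 ^ n := Nat.floor_le (by positivity)
    have hfl2 : s * 2 ^ n < (k : ℝ) + 1 := Nat.lt_floor_add_one _
    have hd : |s - (k : ℝ) / 2 ^ n| ≤ 1 / 2 ^ n := by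
      have hrw : s - (k : ℝ) / 2 ^ n = (s * 2 ^ n - k) / 2 ^ n := by
        field_simp
      rw [hrw, abs_div, abs_of_pos h2n, div_le_div_iff_of_pos_right h2n]
      rw [abs_le]
      constructor <;> linarith
    have hk2' : ((k : ℝ)) ≤ (2:ℝ) ^ n := by
      have := (Nat.cast_le (α := ℝ)).2 hk2
      push_cast at this
      linarith
    have hstep := hdy n k hk2
    have hlip' := hlip s ((k : ℝ) / 2 ^ n)
    have habs := le_abs_self (φ s - φ ((k : ℝ) / 2 ^ n))
    have : φ s ≤ 0 + K * |s - (k : ℝ) / 2 ^ n| := by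
      have := mul_le_mul_of_nonneg_left hd hK
      linarith
    have hKd : K * |s - (k : ℝ) / 2 ^ n| ≤ K * (1 / 2 ^ n) :=
      mul_le_mul_of_nonneg_left hd hK
    calc φ s ≤ 0 + K * (1 / 2 ^ n) := by linarith
      _ = K / 2 ^ n := by ring
  by_contra hpos
  push_neg at hpos
  obtain ⟨n, hn⟩ := pow_unbounded_of_one_lt (K / φ s) (one_lt_two (α := ℝ))
  have h2n : (0:ℝ) < 2 ^ n := by positivity
  have := happrox n
  rw [div_lt_iff₀ hpos] at hn
  have hfin : K / 2 ^ n < φ s := by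
    rw [div_lt_iff₀ h2n]
    nlinarith
  linarith [happrox n]


section Geom

variable {M : Type*} [MetricSpace M]

lemma midpt_symm {x y m : M} (h : IsMidpointPt x y m) : IsMidpointPt y x m :=
  ⟨by rw [dist_comm y x, dist_comm y m]; exact h.2,
   by rw [dist_comm y x, dist_comm m x]; exact h.1⟩

lemma geod_midpt (hM : IsHadamardLike M) (c : SphereBundle M) (u v : ℝ) :
    IsMidpointPt (c.1 u) (c.1 v) (c.1 ((u + v) / 2)) := by
  have h := hM.2.1
  constructor
  · rw [h c u ((u + v) / 2), h c u v]
    rw [show u - (u + v) / 2 = (u - v) / 2 by ring, abs_div]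
    norm_num
  · rw [h c ((u + v) / 2) v, h c u v]
    rw [show (u + v) / 2 - v = (u - v) / 2 by ring, abs_div]
    norm_num

lemma exists_mid (hM : IsHadamardLike M) (x y : M) : ∃ m, IsMidpointPt x y m := by
  obtain ⟨c, h0, h1⟩ := hM.1 x y
  refine ⟨c.1 ((0 + dist x y) / 2), ?_⟩
  have hmp := geod_midpt hM c 0 (dist x y)
  rwa [h0, h1] at hmp

lemma half_lemma (hM : IsHadamardLike M) {x y z my mz : M}
    (hy : IsMidpointPt x y my) (hz : IsMidpointPt x z mz) :
    dist my mz ≤ dist y z / 2 := by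
  have h1 := hM.2.2 my x z mz hz
  have h2 := hM.2.2 z x y my hy
  unfold CAT0Comparison at h1 h2
  have e1 : dist my x = dist x y / 2 := by rw [dist_comm]; exact hy.1
  have e2 : dist z my = dist my z := dist_comm _ _
  have e3 : dist z x = dist x z := dist_comm _ _
  have e4 : dist z y = dist y z := dist_comm _ _
  rw [e1] at h1
  rw [e2, e3, e4] at h2
  nlinarith [@dist_nonneg _ _ my mz, @dist_nonneg _ _ y z, @dist_nonneg _ _ my z]

lemma quad_lemma (hM : IsHadamardLike M) {a1 a2 b1 b2 m1 m2 : M}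
    (h1 : IsMidpointPt a1 a2 m1) (h2 : IsMidpointPt b1 b2 m2) :
    dist m1 m2 ≤ (dist a1 b1 + dist a2 b2) / 2 := by
  obtain ⟨m3, hm3⟩ := exists_mid hM a1 b2
  have e1 : dist m1 m3 ≤ dist a2 b2 / 2 := half_lemma hM h1 hm3
  have e2 : dist m3 m2 ≤ dist a1 b1 / 2 := half_lemma hM (midpt_symm hm3) (midpt_symm h2)
  calc dist m1 m2 ≤ dist m1 m3 + dist m3 m2 := dist_triangle _ _ _
    _ ≤ (dist a1 b1 + dist a2 b2) / 2 := by linarith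

/-- Linear interpolation bound for the distance between two geodesics which agree at
parameters `a`, `b`. -/
lemma geod_interp (hM : IsHadamardLike M) (c c' : SphereBundle M) (a b L B : ℝ)
    (hL : 0 < L) (h0 : dist (c.1 a) (c'.1 b) = 0)
    (hB : dist (c.1 (a + L)) (c'.1 (b + L)) ≤ B)
    {u : ℝ} (hu0 : 0 ≤ u) (huL : u ≤ L) :
    dist (c.1 (a + u)) (c'.1 (b + u)) ≤ u / L * B := by
  set φ : ℝ → ℝ := fun s => dist (c.1 (a + s * L)) (c'.1 (b + s * L)) - s * B with hφ
  have hmid : ∀ u v : ℝ, φ ((u + v) / 2) ≤ (φ u + φ v) / 2 := by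
    intro u v
    have hq := quad_lemma hM (geod_midpt hM c (a + u * L) (a + v * L))
      (geod_midpt hM c' (b + u * L) (b + v * L))
    have e1 : (a + u * L + (a + v * L)) / 2 = a + (u + v) / 2 * L := by ring
    have e2 : (b + u * L + (b + v * L)) / 2 = b + (u + v) / 2 * L := by ring
    rw [e1, e2] at hq
    simp only [hφ]
    linarith
  have hlip : ∀ u v : ℝ, |φ u - φ v| ≤ (2 * L + |B|) * |u - v| := by
    intro u v
    have t1 : |dist (c.1 (a + u * L)) (c'.1 (b + u * L))
        - dist (c.1 (a + v * L)) (c'.1 (b + v * L))|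
        ≤ dist (c.1 (a + u * L)) (c.1 (a + v * L))
          + dist (c'.1 (b + u * L)) (c'.1 (b + v * L)) := by
      have hd := dist_dist_dist_le (c.1 (a + u * L)) (c'.1 (b + u * L))
        (c.1 (a + v * L)) (c'.1 (b + v * L))
      rwa [Real.dist_eq] at hd
    have t2 : dist (c.1 (a + u * L)) (c.1 (a + v * L)) = L * |u - v| := by
      rw [hM.2.1, show a + u * L - (a + v * L) = (u - v) * L by ring, abs_mul,
        abs_of_pos hL]
      ring
    have t3 : dist (c'.1 (b + u * L)) (c'.1 (b + v * L)) = L * |u - v| := by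
      rw [hM.2.1, show b + u * L - (b + v * L) = (u - v) * L by ring, abs_mul,
        abs_of_pos hL]
      ring
    have t4 : |u * B - v * B| ≤ |B| * |u - v| := by
      rw [show u * B - v * B = (u - v) * B by ring, abs_mul, mul_comm]
    have t5 : |φ u - φ v| ≤ |dist (c.1 (a + u * L)) (c'.1 (b + u * L))
        - dist (c.1 (a + v * L)) (c'.1 (b + v * L))| + |u * B - v * B| := by
      simp only [hφ]
      calc |dist (c.1 (a + u * L)) (c'.1 (b + u * L)) - u * B
          - (dist (c.1 (a + v * L)) (c'.1 (b + v * L)) - v * B)|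
          = |(dist (c.1 (a + u * L)) (c'.1 (b + u * L))
            - dist (c.1 (a + v * L)) (c'.1 (b + v * L)))
            + -(u * B - v * B)| := by congr 1; ring
        _ ≤ |dist (c.1 (a + u * L)) (c'.1 (b + u * L))
            - dist (c.1 (a + v * L)) (c'.1 (b + v * L))| + |-(u * B - v * B)| := abs_add_le _ _
        _ = _ := by rw [abs_neg]
    calc |φ u - φ v| ≤ L * |u - v| + L * |u - v| + |B| * |u - v| := by
          rw [t2, t3] at t1; linarith
      _ = (2 * L + |B|) * |u - v| := by ring
  have h00 : φ 0 = 0 := by simp [hφ, h0]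
  have hend : φ 1 ≤ 0 := by
    simp only [hφ, one_mul]
    linarith
  have hs0 : 0 ≤ u / L := by positivity
  have hs1 : u / L ≤ 1 := by
    rw [div_le_one hL]; exact huL
  have hfin := midpoint_interp φ (2 * L + |B|) hmid hlip h00 hend hs0 hs1
  simp only [hφ] at hfin
  rw [div_mul_cancel₀ u (ne_of_gt hL)] at hfin
  linarith

end Geom

section Coords

lemma dist_pmk {X : Type*} [MetricSpace X] (x y : X) (s u : ℝ) :
    dist (pmk x s) (pmk y u) = Real.sqrt (dist x y ^ 2 + (s - u) ^ 2) := by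
  have h2 : (0:ℝ) < (2 : ENNReal).toReal := by simp
  rw [WithLp.prod_dist_eq_add h2]
  have hfst : dist (pmk x s).fst (pmk y u).fst = dist x y := rfl
  have hsnd : dist (pmk x s).snd (pmk y u).snd = |s - u| := Real.dist_eq s u
  rw [hfst, hsnd]
  rw [show ((2 : ENNReal).toReal) = ((2:ℕ):ℝ) by simp]
  rw [Real.rpow_natCast, Real.rpow_natCast]
  rw [show (1 / ((2:ℕ):ℝ)) = (1/2 : ℝ) by norm_num, ← Real.sqrt_eq_rpow]
  rw [sq_abs]

lemma snd_dist_le {X : Type*} [MetricSpace X] (x y : X) (s u : ℝ) :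
    |s - u| ≤ dist (pmk x s) (pmk y u) := by
  rw [dist_pmk, ← Real.sqrt_sq_eq_abs]
  apply Real.sqrt_le_sqrt
  nlinarith [sq_nonneg (dist x y)]

lemma dist_pmk_same {X : Type*} [MetricSpace X] (x : X) (s u : ℝ) :
    dist (pmk x s) (pmk x u) = |s - u| := by
  rw [dist_pmk]
  simp [Real.sqrt_sq_eq_abs]

end Coords

section Affine

/-- Pure algebra: equality case of Minkowski/Cauchy-Schwarz for a triple of points. -/
lemma slope_alg (a1 b1 a2 b2 a3 T1 T2 : ℝ)
    (e1 : a1 ^ 2 + b1 ^ 2 = T1 ^ 2) (e2 : a2 ^ 2 + b2 ^ 2 = T2 ^ 2)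
    (e3 : a3 ^ 2 + (b1 + b2) ^ 2 = (T1 + T2) ^ 2)
    (htri : a3 ≤ a1 + a2) (ha1 : 0 ≤ a1) (ha2 : 0 ≤ a2) (ha3 : 0 ≤ a3)
    (hT1 : 0 < T1) (hT2 : 0 < T2) :
    b1 * T2 = b2 * T1 := by
  have hsq : a3 ^ 2 ≤ (a1 + a2) ^ 2 := by nlinarith
  have hA : T1 * T2 ≤ a1 * a2 + b1 * b2 := by nlinarith
  have hABpos : 0 ≤ a1 * a2 + b1 * b2 := le_trans (le_of_lt (mul_pos hT1 hT2)) hA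
  have hB2 : (a1 * a2 + b1 * b2) ^ 2 ≤ (T1 * T2) ^ 2 := by
    nlinarith [sq_nonneg (a1 * b2 - a2 * b1)]
  have hBle : a1 * a2 + b1 * b2 ≤ T1 * T2 := by
    nlinarith [mul_pos hT1 hT2]
  have heq : a1 * a2 + b1 * b2 = T1 * T2 := le_antisymm hBle hA
  have hid : (a1 * b2 - a2 * b1) ^ 2 = T1 ^ 2 * T2 ^ 2 - (a1 * a2 + b1 * b2) ^ 2 := by
    linear_combination (a2 ^ 2 + b2 ^ 2) * e1 + T1 ^ 2 * e2
  have hz2 : (a1 * a2 + b1 * b2) ^ 2 = T1 ^ 2 * T2 ^ 2 := by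
    rw [heq]; ring
  have hcross0 : a1 * b2 - a2 * b1 = 0 := by
    have hzz : (a1 * b2 - a2 * b1) ^ 2 = 0 := by rw [hid, hz2]; ring
    exact pow_eq_zero_iff (n := 2) (by norm_num) |>.mp hzz
  have hb1sq : (b1 * T2) ^ 2 = (b2 * T1) ^ 2 := by
    linear_combination (-(b1 ^ 2)) * e2 + (b2 ^ 2) * e1 - (a1 * b2 + a2 * b1) * hcross0
  have ha1le : a1 ≤ T1 := by nlinarith
  have ha2le : a2 ≤ T2 := by nlinarith
  have hbb : 0 ≤ b1 * b2 := by
    have hmul : a1 * a2 ≤ T1 * T2 := mul_le_mul ha1le ha2le ha2 (le_of_lt hT1)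
    linarith
  have hfac : (b1 * T2 - b2 * T1) * (b1 * T2 + b2 * T1) = 0 := by
    linear_combination hb1sq
  rcases mul_eq_zero.mp hfac with hc | hc
  · linarith [sub_eq_zero.mp hc]
  · have hid2 : (b2 * T1) ^ 2 = -(b1 * b2 * (T1 * T2)) := by
      linear_combination (b2 * T1) * hc
    have hnn : 0 ≤ b1 * b2 * (T1 * T2) := mul_nonneg hbb (le_of_lt (mul_pos hT1 hT2))
    have h1 : (b2 * T1) ^ 2 ≤ 0 := by rw [hid2]; linarith
    have h2 : b2 * T1 = 0 :=
      pow_eq_zero_iff (n := 2) (by norm_num) |>.mp (le_antisymm h1 (sq_nonneg _))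
    have h3 : b1 * T2 = 0 := by linarith
    rw [h2, h3]

/-- A unit-speed line in an `ℓ²`-product whose `ℝ`-coordinate stays within bounded distance
of its parameter is a vertical line. -/
lemma affine_core {X : Type*} [MetricSpace X] (ξ : ℝ → X) (h : ℝ → ℝ) (B : ℝ)
    (hunit : ∀ s u : ℝ, dist (ξ s) (ξ u) ^ 2 + (h s - h u) ^ 2 = (s - u) ^ 2)
    (hb : ∀ s : ℝ, |h s - s| ≤ B) :
    ∀ s : ℝ, h s = h 0 + s ∧ ξ s = ξ 0 := by
  have key : ∀ s u v : ℝ, s < u → u < v →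
      (h u - h s) * (v - u) = (h v - h u) * (u - s) := by
    intro s u v hsu huv
    refine slope_alg (dist (ξ s) (ξ u)) (h u - h s) (dist (ξ u) (ξ v)) (h v - h u)
      (dist (ξ s) (ξ v)) (u - s) (v - u) ?_ ?_ ?_ (dist_triangle _ _ _)
      dist_nonneg dist_nonneg dist_nonneg (by linarith) (by linarith)
    · linear_combination hunit s u
    · linear_combination hunit u v
    · linear_combination hunit s v
  set κ := h 1 - h 0 with hκ
  have hslope : ∀ s : ℝ, h s = h 0 + κ * s := by
    intro s
    rcases lt_trichotomy s 0 with hs | hs | hs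
    · have hk := key s 0 1 hs one_pos
      linear_combination (-1 : ℝ) * hk - s * hκ
    · rw [hs]; simp
    · rcases lt_trichotomy s 1 with h1s | h1s | h1s
      · have hk := key 0 s 1 hs h1s
        linear_combination hk - s * hκ
      · rw [h1s]; rw [hκ]; ring
      · have hk := key 0 1 s one_pos h1s
        linear_combination (-1 : ℝ) * hk - s * hκ
  have hB0 : 0 ≤ B := le_trans (abs_nonneg _) (hb 0)
  have hκ1 : κ = 1 := by
    by_contra hne
    have hne' : κ - 1 ≠ 0 := fun hc => hne (sub_eq_zero.mp hc)
    set s := (B + 1 + |h 0|) / (κ - 1) with hsdef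
    have hBs := hb s
    rw [hslope s] at hBs
    have hmul : (κ - 1) * s = B + 1 + |h 0| := by
      rw [hsdef]; field_simp
    have hrw : h 0 + κ * s - s = h 0 + (B + 1 + |h 0|) := by
      have hr : h 0 + κ * s - s = h 0 + (κ - 1) * s := by ring
      rw [hr, hmul]
    rw [hrw] at hBs
    have hpos : 0 < h 0 + (B + 1 + |h 0|) := by
      have := neg_abs_le (h 0)
      linarith
    rw [abs_of_pos hpos] at hBs
    have := neg_abs_le (h 0)
    linarith
  intro s
  refine ⟨by rw [hslope s, hκ1]; ring, ?_⟩
  have hu := hunit s 0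
  have hhs : h s - h 0 = s := by rw [hslope s, hκ1]; ring
  rw [hhs] at hu
  have hd2 : dist (ξ s) (ξ 0) ^ 2 = 0 := by linear_combination hu
  have hd0 : dist (ξ s) (ξ 0) = 0 :=
    pow_eq_zero_iff (n := 2) (by norm_num) |>.mp hd2
  exact dist_eq_zero.mp hd0

end Affine

section Vertical

/-- Reversal of a geodesic. -/
def SB_rev {M : Type*} [MetricSpace M] (c : SphereBundle M) : SphereBundle M :=
  ⟨fun s => c.1 (-s), by
    obtain ⟨ε, hε, hc⟩ := c.2
    refine ⟨ε, hε, fun s t hst => ?_⟩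
    have h1 : |(-s) - (-t)| ≤ ε := by
      rw [show (-s) - (-t) = -(s - t) by ring, abs_neg]; exact hst
    have := hc (-s) (-t) h1
    rw [this, show (-s) - (-t) = -(s - t) by ring, abs_neg]⟩

lemma sqrt_near (d w : ℝ) (hw : 0 < w) :
    w ≤ Real.sqrt (d ^ 2 + w ^ 2) ∧ Real.sqrt (d ^ 2 + w ^ 2) ≤ w + d ^ 2 / (2 * w) := by
  constructor
  · have h1 : Real.sqrt (w ^ 2) ≤ Real.sqrt (d ^ 2 + w ^ 2) :=
      Real.sqrt_le_sqrt (by nlinarith [sq_nonneg d])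
    rwa [Real.sqrt_sq hw.le] at h1
  · have hexp : (w + d ^ 2 / (2 * w)) ^ 2 = w ^ 2 + d ^ 2 + (d ^ 2 / (2 * w)) ^ 2 := by
      field_simp
      ring
    have h2 : Real.sqrt (d ^ 2 + w ^ 2) ≤ Real.sqrt ((w + d ^ 2 / (2 * w)) ^ 2) := by
      apply Real.sqrt_le_sqrt
      rw [hexp]
      nlinarith [sq_nonneg (d ^ 2 / (2 * w))]
    rwa [Real.sqrt_sq (by positivity)] at h2

/-- In a vertical splitting the base geodesic `ν` is itself a vertical line. -/
lemma nu_vertical {M X : Type*} [MetricSpace M] [MetricSpace X]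
    (hM2 : ∀ c : SphereBundle M, ∀ s t : ℝ, dist (c.1 s) (c.1 t) = |s - t|)
    (ν : SphereBundle M) (S : VerticalSplitting ν X) :
    ∃ x₀ e, ∀ s : ℝ, ν.1 s = S.Φ (pmk x₀ (s + e)) := by
  have hmem : ∀ s : ℝ, ν.1 s ∈ Set.range S.Φ := by
    intro s
    rw [S.range_eq]
    exact ⟨ν, ⟨0, fun t => by simp⟩, ⟨s, rfl⟩⟩
  choose q hq using hmem
  set ξ : ℝ → X := fun s => (q s).fst with hξ
  set h : ℝ → ℝ := fun s => (q s).snd with hh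
  have hq' : ∀ s, ν.1 s = S.Φ (pmk (ξ s) (h s)) := by
    intro s
    rw [← hq s]
    rfl
  have hunit : ∀ s u : ℝ, dist (ξ s) (ξ u) ^ 2 + (h s - h u) ^ 2 = (s - u) ^ 2 := by
    intro s u
    have hd := hM2 ν s u
    rw [hq' s, hq' u, S.isom.dist_eq, dist_pmk] at hd
    have hnn : (0:ℝ) ≤ dist (ξ s) (ξ u) ^ 2 + (h s - h u) ^ 2 := by positivity
    have hsq := congrArg (fun z : ℝ => z ^ 2) hd
    rw [Real.sq_sqrt hnn, sq_abs] at hsq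
    exact hsq
  obtain ⟨p, hp, ⟨Cv, hCv⟩⟩ := S.vertical (ξ 0)
  have hb : ∀ s : ℝ, |h s - s| ≤ Cv := by
    intro s
    have h1 := hCv s
    rw [hp s, hq' s, S.isom.dist_eq] at h1
    have h2 := snd_dist_le (ξ 0) (ξ s) s (h s)
    calc |h s - s| = |s - h s| := abs_sub_comm _ _
      _ ≤ dist (pmk (ξ 0) s) (pmk (ξ s) (h s)) := h2
      _ ≤ Cv := h1
  refine ⟨ξ 0, h 0, fun s => ?_⟩
  obtain ⟨h1, h2⟩ := affine_core ξ h Cv hunit hb s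
  rw [hq' s, h2, h1, add_comm (h 0) s]

end Vertical

end GrowthAux

/-- Lemma 2 of the paper.  In the lifted conjugacy setting, let `ν` be a
geodesic of `M`, with product structures `M_ν ≅ X × ℝ` and `M'_{F ν} ≅ X' × ℝ`.  If a curve
`c(t) = Φ (σ t, ρ t)` in `M_ν` has `ℝ`-growth rate `A` (i.e. `ρ t / t → A` as `t → ∞`) and
`t ↦ Φ' (σ' t, ρ' t)` is its image under the vertical-correspondence map `G_ν`, then the
image curve also has `ℝ`-growth rate `A`. -/
theorem growth_rate_preserved
    {Γ M M' : Type*} [Group Γ] [MetricSpace M] [MetricSpace M']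
    [MulAction Γ M] [MulAction Γ M'] [IsIsometricSMul Γ M] [IsIsometricSMul Γ M']
    [SimplyConnectedSpace M] [SimplyConnectedSpace M']
    (n : ℕ) (hn : 3 ≤ n)
    (hdim : Nonempty (ChartedSpace (EuclideanSpace ℝ (Fin n)) M) ∧
      Nonempty (ChartedSpace (EuclideanSpace ℝ (Fin n)) M'))
    (hM : IsHadamardLike M) (hM' : IsHadamardLike M')
    (hco : CocompactAction Γ M) (hco' : CocompactAction Γ M')
    (F : FlowConjugacy M M')
    (hUC : UnifContOnSphere F.F)
    (hequiv : ∀ (g : Γ) (c : SphereBundle M), F.F (gAct g c) = gAct g (F.F c))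
    (ν : SphereBundle M) {X X' : Type*} [MetricSpace X] [MetricSpace X']
    (S : VerticalSplitting ν X) (S' : VerticalSplitting (F.F ν) X')
    (σ : ℝ → X) (ρ : ℝ → ℝ) (σ' : ℝ → X') (ρ' : ℝ → ℝ)
    (himage : ∀ t : ℝ, ∃ p : SphereBundle M, ParallelTo ν p ∧
      p.1 0 = S.Φ (pmk (σ t) (ρ t)) ∧ (F.F p).1 0 = S'.Φ (pmk (σ' t) (ρ' t)))
    (A : ℝ)
    (hA : Tendsto (fun t : ℝ => ρ t / t) atTop (nhds A)) :
    Tendsto (fun t : ℝ => ρ' t / t) atTop (nhds A) := by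
  classical
  obtain ⟨x₀, e, hν⟩ := GrowthAux.nu_vertical hM.2.1 ν S
  obtain ⟨x₀', e', hν'⟩ := GrowthAux.nu_vertical hM'.2.1 (F.F ν) S'
  have key : ∀ t : ℝ, ρ' t = ρ t + (e' - e) := by
    intro t
    obtain ⟨p, ⟨C, hC⟩, hp0, hFp0⟩ := himage t
    have hC0 : 0 ≤ C := le_trans dist_nonneg (hC 0)
    set D := dist (σ t) x₀ with hD
    set D' := dist (σ' t) x₀' with hD'
    have hD0 : 0 ≤ D := dist_nonneg
    have hD'0 : 0 ≤ D' := dist_nonneg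
    set a := e - ρ t with ha
    set a' := e' - ρ' t with ha'
    clear_value D D' a a'
    have hmain : ∀ ε : ℝ, 0 < ε → |a' - a| ≤ 4 * ε := by
      intro ε hε
      obtain ⟨δ, hδ, hUCε⟩ := hUC ε hε
      set T := |a| + |a'| + C + 2 + 4 * C / δ + D ^ 2 / (2 * ε) + D' ^ 2 / (2 * ε) + 1 with hT
      clear_value T
      have hterm1 : 0 ≤ 4 * C / δ := by positivity
      have hterm2 : 0 ≤ D ^ 2 / (2 * ε) := by positivity
      have hterm3 : 0 ≤ D' ^ 2 / (2 * ε) := by positivity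
      have hTa : 1 ≤ T + a := by
        have := neg_abs_le a
        have := abs_nonneg a'
        rw [hT]; linarith
      have hTa' : 1 ≤ T + a' := by
        have := neg_abs_le a'
        have := abs_nonneg a
        rw [hT]; linarith
      have hT0 : 0 ≤ T := by
        have := abs_nonneg a
        have := abs_nonneg a'
        rw [hT]; linarith
      set L := dist (p.1 0) (ν.1 T) with hLdef
      clear_value L
      -- L in coordinates
      have hLform : L = Real.sqrt (D ^ 2 + (T + a) ^ 2) := by
        rw [hLdef, hp0, hν T, S.isom.dist_eq, GrowthAux.dist_pmk, ← hD]
        congr 1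
        rw [ha]
        ring
      have hq1 := GrowthAux.sqrt_near D (T + a) (by linarith)
      have hq2 := GrowthAux.sqrt_near D' (T + a') (by linarith)
      have hLT : |L - T| ≤ C := by
        have h1 := abs_dist_sub_le (p.1 0) (ν.1 0) (ν.1 T)
        have h2 : dist (ν.1 0) (ν.1 T) = T := by
          rw [hM.2.1 ν 0 T, zero_sub, abs_neg, abs_of_nonneg hT0]
        rw [h2, ← hLdef] at h1
        exact le_trans h1 (hC 0)
      have hL2 : 2 ≤ L := by
        obtain ⟨h1a, h1b⟩ := abs_le.mp hLT
        have : C + 2 ≤ T := by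
          have := abs_nonneg a
          have := abs_nonneg a'
          rw [hT]; linarith
        linarith
      have hLpos : (0:ℝ) < L := by linarith
      have hL4 : 4 * C / δ ≤ L := by
        obtain ⟨h1a, h1b⟩ := abs_le.mp hLT
        have : C + 4 * C / δ ≤ T := by
          have := abs_nonneg a
          have := abs_nonneg a'
          rw [hT]; linarith
        linarith
      have hLδ : 2 / L * (2 * C) ≤ δ := by
        have h1 : 2 / L * (2 * C) = 4 * C / L := by ring
        rw [h1, div_le_iff₀ hLpos]
        have h2 : 4 * C ≤ L * δ := by
          have := (div_le_iff₀ hδ).mp hL4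
          linarith
        linarith
      obtain ⟨c, hc0, hcL⟩ := hM.1 (p.1 0) (ν.1 T)
      rw [← hLdef] at hcL
      -- start window
      have h0' : dist (c.1 0) (p.1 0) = 0 := by rw [hc0, dist_self]
      have hB' : dist (c.1 (0 + L)) (p.1 (0 + L)) ≤ 2 * C := by
        simp only [zero_add]
        rw [hcL]
        have h1 : dist (ν.1 T) (p.1 L) ≤ dist (ν.1 T) (ν.1 L) + dist (ν.1 L) (p.1 L) :=
          dist_triangle _ _ _
        have h2 : dist (ν.1 T) (ν.1 L) ≤ C := by
          rw [hM.2.1 ν T L, abs_sub_comm]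
          exact hLT
        have h3 : dist (ν.1 L) (p.1 L) ≤ C := by
          rw [dist_comm]; exact hC L
        linarith
      have hw1 : ∀ u ∈ Set.Icc (-1:ℝ) 1,
          dist ((geodFlow 1 c).1 u) ((geodFlow 1 p).1 u) ≤ δ := by
        intro u hu
        show dist (c.1 (u + 1)) (p.1 (u + 1)) ≤ δ
        have hi := GrowthAux.geod_interp hM c p 0 0 L (2 * C) hLpos h0' hB'
          (u := u + 1) (by linarith [hu.1]) (by linarith [hu.2])
        simp only [zero_add] at hi
        have hb2 : (u + 1) / L * (2 * C) ≤ 2 / L * (2 * C) := by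
          gcongr <;> linarith [hu.1, hu.2]
        linarith
      have E1 := hUCε (geodFlow 1 c) (geodFlow 1 p) hw1 (-1) (by norm_num)
      rw [F.conj 1 c, F.conj 1 p] at E1
      have E1' : dist ((F.F c).1 ((-1) + 1)) ((F.F p).1 ((-1) + 1)) ≤ ε := E1
      rw [show ((-1:ℝ) + 1) = 0 by norm_num] at E1'
      -- end window
      have h0'' : dist ((GrowthAux.SB_rev c).1 (-L)) ((GrowthAux.SB_rev ν).1 (-T)) = 0 := by
        show dist (c.1 (-(-L))) (ν.1 (-(-T))) = 0
        rw [neg_neg, neg_neg, hcL, dist_self]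
      have hB'' : dist ((GrowthAux.SB_rev c).1 (-L + L)) ((GrowthAux.SB_rev ν).1 (-T + L))
          ≤ 2 * C := by
        show dist (c.1 (-(-L + L))) (ν.1 (-(-T + L))) ≤ 2 * C
        rw [show -(-L + L) = (0:ℝ) by ring, show -(-T + L) = T - L by ring, hc0]
        have h1 : dist (p.1 0) (ν.1 (T - L)) ≤ dist (p.1 0) (ν.1 0) + dist (ν.1 0) (ν.1 (T - L)) :=
          dist_triangle _ _ _
        have h2 : dist (ν.1 0) (ν.1 (T - L)) ≤ C := by
          rw [hM.2.1 ν 0 (T - L), show (0:ℝ) - (T - L) = L - T by ring]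
          exact hLT
        linarith [hC 0]
      have hw2 : ∀ u ∈ Set.Icc (-1:ℝ) 1,
          dist ((geodFlow (L - 1) c).1 u) ((geodFlow (T - 1) ν).1 u) ≤ δ := by
        intro u hu
        show dist (c.1 (u + (L - 1))) (ν.1 (u + (T - 1))) ≤ δ
        have hi := GrowthAux.geod_interp hM (GrowthAux.SB_rev c) (GrowthAux.SB_rev ν)
          (-L) (-T) L (2 * C) hLpos h0'' hB''
          (u := 1 - u) (by linarith [hu.2]) (by linarith [hu.1])
        have harg1 : (GrowthAux.SB_rev c).1 (-L + (1 - u)) = c.1 (u + (L - 1)) := by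
          show c.1 (-(-L + (1 - u))) = c.1 (u + (L - 1))
          congr 1
          ring
        have harg2 : (GrowthAux.SB_rev ν).1 (-T + (1 - u)) = ν.1 (u + (T - 1)) := by
          show ν.1 (-(-T + (1 - u))) = ν.1 (u + (T - 1))
          congr 1
          ring
        rw [harg1, harg2] at hi
        have hb2 : (1 - u) / L * (2 * C) ≤ 2 / L * (2 * C) := by
          gcongr <;> linarith [hu.1, hu.2]
        linarith
      have E2 := hUCε (geodFlow (L - 1) c) (geodFlow (T - 1) ν) hw2 1 (by norm_num)
      rw [F.conj (L - 1) c, F.conj (T - 1) ν] at E2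
      have E2' : dist ((F.F c).1 (1 + (L - 1))) ((F.F ν).1 (1 + (T - 1))) ≤ ε := E2
      rw [show (1 + (L - 1)) = L by ring, show (1 + (T - 1)) = T by ring] at E2'
      -- exactness along the image geodesic
      have hex : dist ((F.F c).1 0) ((F.F c).1 L) = L := by
        rw [hM'.2.1 (F.F c) 0 L, zero_sub, abs_neg, abs_of_nonneg (le_of_lt hLpos)]
      -- the image distance
      have hnear : |dist ((F.F p).1 0) ((F.F ν).1 T) - L| ≤ 2 * ε := by
        have t1 := dist_triangle4 ((F.F p).1 0) ((F.F c).1 0) ((F.F c).1 L) ((F.F ν).1 T)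
        have t2 := dist_triangle4 ((F.F c).1 0) ((F.F p).1 0) ((F.F ν).1 T) ((F.F c).1 L)
        have c1 : dist ((F.F p).1 0) ((F.F c).1 0) ≤ ε := by
          rw [dist_comm]; exact E1'
        have c2 : dist ((F.F ν).1 T) ((F.F c).1 L) ≤ ε := by
          rw [dist_comm]; exact E2'
        rw [abs_le]
        constructor
        · have := hex ▸ t2
          linarith
        · linarith [t1, hex, E2', c1]
      have hPX : dist ((F.F p).1 0) ((F.F ν).1 T) = Real.sqrt (D' ^ 2 + (T + a') ^ 2) := by
        rw [hFp0, hν' T, S'.isom.dist_eq, GrowthAux.dist_pmk, ← hD']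
        congr 1
        rw [ha']
        ring
      -- error bounds
      have hDT : D ^ 2 / (2 * (T + a)) ≤ ε := by
        have h1 : D ^ 2 / (2 * ε) ≤ T + a := by
          have := neg_abs_le a
          have := abs_nonneg a'
          rw [hT]; linarith
        rw [div_le_iff₀ (by linarith : (0:ℝ) < 2 * (T + a))]
        have h2 := (div_le_iff₀ (by positivity : (0:ℝ) < 2 * ε)).mp h1
        have h3 : ε * (2 * (T + a)) = (T + a) * (2 * ε) := by ring
        rw [h3]
        exact h2
      have hDT' : D' ^ 2 / (2 * (T + a')) ≤ ε := by
        have h1 : D' ^ 2 / (2 * ε) ≤ T + a' := by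
          have := neg_abs_le a'
          have := abs_nonneg a
          rw [hT]; linarith
        rw [div_le_iff₀ (by linarith : (0:ℝ) < 2 * (T + a'))]
        have h2 := (div_le_iff₀ (by positivity : (0:ℝ) < 2 * ε)).mp h1
        have h3 : ε * (2 * (T + a')) = (T + a') * (2 * ε) := by ring
        rw [h3]
        exact h2
      -- combine
      have k1 : T + a ≤ L := by rw [hLform]; exact hq1.1
      have k2 : L ≤ T + a + ε := by
        rw [hLform]
        exact le_trans hq1.2 (by linarith)
      have k3 : T + a' ≤ dist ((F.F p).1 0) ((F.F ν).1 T) := by rw [hPX]; exact hq2.1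
      have k4 : dist ((F.F p).1 0) ((F.F ν).1 T) ≤ T + a' + ε := by
        rw [hPX]
        exact le_trans hq2.2 (by linarith)
      have k5 := abs_le.mp hnear
      rw [abs_le]
      constructor
      · linarith [k5.1]
      · linarith [k5.2]
    have haa : a' = a := by
      by_contra hne
      have habs : 0 < |a' - a| := abs_pos.mpr (sub_ne_zero.mpr hne)
      have := hmain (|a' - a| / 8) (by positivity)
      linarith
    have : e' - ρ' t = e - ρ t := by rw [← ha, ← ha', haa]
    linarith
  have hzero : Tendsto (fun t : ℝ => (e' - e) / t) atTop (nhds 0) :=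
    Tendsto.div_atTop tendsto_const_nhds tendsto_id
  have hsum := hA.add hzero
  rw [add_zero] at hsum
  refine hsum.congr fun t => ?_
  rw [key t, add_div]
end
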